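/- arXiv:2506.09401 — 5 statements merged into one kernel-verified Lean document; each statement's English description precedes it below -/
import Mathlib

section
/- Let S be a Polish space and let Z ⊆ P(P(S)) be a tight family of probability measures on P(S). Then the set of barycenters {bar(X) : X ∈ Z} ⊆ P(S), where bar(X)(B) = ∫ ν(B) X(dν) for Borel B ⊆ S, is tight in P(S). -/
open MeasureTheory Topology Filter
open scoped ENNReal NNReal

/-- A family `A` of Borel probability measures on a topological space is *tight* if for every
`ε > 0` there is a compact set `K` such that `μ K > 1 - ε` for every `μ ∈ A`. -/
def IsTightFamily {α : Type*} [TopologicalSpace α] [MeasurableSpace α]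
    (A : Set (ProbabilityMeasure α)) : Prop :=
  ∀ ε : ℝ≥0∞, 0 < ε → ∃ K : Set α, IsCompact K ∧ ∀ μ ∈ A, 1 - ε < (μ : Measure α) K


open MeasureTheory Topology Filter Set
open scoped ENNReal NNReal

/-- A compact family of probability measures on a Polish space is uniformly tight
(one direction of Prokhorov's theorem). -/
lemma compl_le_of_isCompact_family
    {S : Type*} [MeasurableSpace S] [TopologicalSpace S] [PolishSpace S] [BorelSpace S]
    {A : Set (ProbabilityMeasure S)} (hA : IsCompact A)
    {δ : ℝ≥0∞} (hδ0 : 0 < δ) (hδ1 : δ ≤ 1) :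
    ∃ K : Set S, IsCompact K ∧ ∀ ν ∈ A, (ν : Measure S) Kᶜ ≤ δ := by
  rcases A.eq_empty_or_nonempty with rfl | ⟨ν₀, hν₀⟩
  · exact ⟨∅, isCompact_empty, fun ν hν => hν.elim⟩
  haveI : Nonempty S := ν₀.nonempty
  letI := TopologicalSpace.upgradeIsCompletelyMetrizable S
  set u : ℕ → S := TopologicalSpace.denseSeq S with hu
  have hdense : DenseRange u := TopologicalSpace.denseRange_denseSeq S
  set V : ℕ → ℕ → Set S := fun n m => ⋃ i ∈ Finset.range m, Metric.ball (u i) (1 / (n + 1)) with hV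
  have V_open : ∀ n m, IsOpen (V n m) := fun n m =>
    isOpen_biUnion fun i _ => Metric.isOpen_ball
  have V_mono : ∀ n, Monotone (V n) := by
    intro n m₁ m₂ h
    exact Set.biUnion_subset_biUnion_left (Finset.range_subset_range.2 h)
  have V_univ : ∀ n, (⋃ m, V n m) = Set.univ := by
    intro n
    apply Set.eq_univ_of_forall
    intro x
    have hr : (0 : ℝ) < 1 / (n + 1) := by positivity
    obtain ⟨i, hi⟩ := Metric.denseRange_iff.1 hdense x _ hr
    exact Set.mem_iUnion.2 ⟨i + 1, Set.mem_biUnion (Finset.mem_range.2 (Nat.lt_succ_self i))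
      (by simpa [dist_comm] using hi)⟩
  -- key step: uniformly over the compact family, find a good finite union of balls
  have key : ∀ n : ℕ, ∃ M : ℕ, ∀ ν ∈ A, (ν : Measure S) (V n M)ᶜ ≤ δ / 2 ^ (n + 1) := by
    intro n
    set η : ℝ≥0∞ := δ / 2 ^ (n + 2) with hη
    have hη0 : 0 < η := by
      apply ENNReal.div_pos hδ0.ne' (by simp)
    have hη1 : η ≤ 1 := by
      calc η ≤ 1 / 2 ^ (n + 2) := ENNReal.div_le_div hδ1 le_rfl
        _ ≤ 1 := by
              apply ENNReal.div_le_of_le_mul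
              rw [one_mul]
              exact one_le_two.trans (le_self_pow₀ one_le_two (by omega))
    -- for each P ∈ A, choose m with P (V n m) > 1 - η
    have exm : ∀ P : ProbabilityMeasure S, ∃ m : ℕ,
        1 - η < (P : Measure S) (V n m) := by
      intro P
      have h1 : (P : Measure S) (⋃ m, V n m) = 1 := by
        rw [V_univ n]; simp
      rw [(V_mono n).measure_iUnion] at h1
      have hlt : 1 - η < ⨆ m, (P : Measure S) (V n m) := by
        rw [h1]
        exact ENNReal.sub_lt_self ENNReal.one_ne_top one_ne_zero hη0.ne'
      exact lt_iSup_iff.1 hlt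
    choose m hm using exm
    -- cover A by the corresponding neighborhoods
    have hcov : ∀ P ∈ A, {Q : ProbabilityMeasure S |
        (P : Measure S) (V n (m P)) < (Q : Measure S) (V n (m P)) + η} ∈ 𝓝 P :=
      fun P _ => P.toMeasure_add_pos_gt_mem_nhds (V_open n (m P)) hη0
    obtain ⟨t, -, ht⟩ := hA.elim_nhds_subcover _ hcov
    refine ⟨t.sup m, fun ν hν => ?_⟩
    obtain ⟨P, hPt, hP⟩ := Set.mem_iUnion₂.1 (ht hν)
    simp only [Set.mem_setOf_eq] at hP
    have h1 : 1 - η < (ν : Measure S) (V n (t.sup m)) + η :=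
      lt_of_lt_of_le (lt_of_le_of_lt (hm P).le hP)
        (add_le_add_left (measure_mono (V_mono n (Finset.le_sup hPt))) η)
    have h2 : 1 ≤ (ν : Measure S) (V n (t.sup m)) + η + η := by
      calc (1 : ℝ≥0∞) = 1 - η + η := (tsub_add_cancel_of_le hη1).symm
        _ ≤ (ν : Measure S) (V n (t.sup m)) + η + η := add_le_add_left h1.le η
    have h3 : (ν : Measure S) (V n (t.sup m))ᶜ ≤ η + η := by
      rw [prob_compl_eq_one_sub (V_open n _).measurableSet, tsub_le_iff_left]
      rw [add_assoc] at h2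
      exact h2
    refine h3.trans ?_
    rw [hη, ENNReal.div_add_div_same, ← two_mul, pow_succ' (2 : ℝ≥0∞) (n + 1),
      ENNReal.mul_div_mul_left _ _ two_ne_zero (by simp)]
  choose M hM using key
  refine ⟨⋂ n, closure (V n (M n)), ?_, ?_⟩
  · apply TotallyBounded.isCompact_of_isClosed
    · rw [Metric.totallyBounded_iff]
      intro ε hε
      obtain ⟨n, hn⟩ := exists_nat_one_div_lt hε
      refine ⟨u '' (Finset.range (M n) : Set ℕ), (Set.toFinite _).image u, ?_⟩
      intro x hx
      have hx' : x ∈ closure (V n (M n)) := Set.mem_iInter.1 hx n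
      have hsub : closure (V n (M n)) ⊆
          ⋃ i ∈ Finset.range (M n), Metric.closedBall (u i) (1 / (n + 1)) := by
        apply closure_minimal
        · exact Set.iUnion₂_mono fun i _ => Metric.ball_subset_closedBall
        · exact isClosed_biUnion_finset fun i _ => Metric.isClosed_closedBall
      obtain ⟨i, hi, hxi⟩ := Set.mem_iUnion₂.1 (hsub hx')
      refine Set.mem_biUnion ⟨i, by simpa using hi, rfl⟩ ?_
      exact Metric.closedBall_subset_ball hn hxi
    · exact isClosed_iInter fun n => isClosed_closure
  · intro ν hν
    have hc : (⋂ n, closure (V n (M n)))ᶜ = ⋃ n, (closure (V n (M n)))ᶜ := by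
      simp [Set.compl_iInter]
    rw [hc]
    calc (ν : Measure S) (⋃ n, (closure (V n (M n)))ᶜ)
        ≤ ∑' n, (ν : Measure S) (closure (V n (M n)))ᶜ := measure_iUnion_le _
      _ ≤ ∑' n, δ / 2 ^ (n + 1) := by
          apply ENNReal.tsum_le_tsum
          intro n
          exact le_trans (measure_mono (Set.compl_subset_compl.2 subset_closure)) (hM n ν hν)
      _ = δ := by
          have h : ∀ n : ℕ, δ / 2 ^ (n + 1) = δ * 2⁻¹ * 2⁻¹ ^ n := by
            intro n
            rw [pow_succ', ENNReal.inv_pow.symm, div_eq_mul_inv,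
              ENNReal.mul_inv (by simp) (by simp), ← mul_assoc, ENNReal.inv_pow]
          simp_rw [h]
          rw [ENNReal.tsum_mul_left, ENNReal.tsum_geometric, ENNReal.one_sub_inv_two]
          simp [mul_assoc, ENNReal.inv_mul_cancel]


/-- If `Z ⊆ P(P(S))` is tight, then the set of barycenters of members of `Z` is tight
in `P(S)`, where `m ∈ P(S)` is a barycenter of `X ∈ P(P(S))` if
`m B = ∫ ν B dX(ν)` for all Borel `B ⊆ S`. -/
theorem tight_barycenters_of_tight
    {S : Type*} [MeasurableSpace S] [TopologicalSpace S] [PolishSpace S] [BorelSpace S]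
    [MeasurableSpace (ProbabilityMeasure S)] [BorelSpace (ProbabilityMeasure S)]
    (Z : Set (ProbabilityMeasure (ProbabilityMeasure S)))
    (hZ : IsTightFamily Z) :
    IsTightFamily {m : ProbabilityMeasure S | ∃ X ∈ Z, ∀ B : Set S, MeasurableSet B →
      (m : Measure S) B
        = ∫⁻ ν, (ν : Measure S) B ∂(X : Measure (ProbabilityMeasure S))} := by
  intro ε hε
  set η : ℝ≥0∞ := min ε 1 / 2 with hη
  have hη0 : 0 < η := ENNReal.div_pos (lt_min hε one_pos).ne' (by simp)
  have hη1 : η < 1 := by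
    calc η ≤ 1 / 2 := ENNReal.div_le_div (min_le_right _ _) le_rfl
      _ < 1 := by rw [ENNReal.div_lt_iff (by simp) (by simp)]; simp [one_lt_two]
  have hηε : η < ε := by
    rcases le_total ε 1 with h | h
    · rw [hη, min_eq_left h]
      exact ENNReal.half_lt_self hε.ne' (lt_of_le_of_lt h ENNReal.one_lt_top).ne
    · exact lt_of_lt_of_le hη1 h
  set δ : ℝ≥0∞ := η / 2 with hδ
  have hδ0 : 0 < δ := ENNReal.div_pos hη0.ne' (by simp)
  have hδ1 : δ ≤ 1 := le_trans (ENNReal.div_le_div hη1.le le_rfl)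
    (by rw [ENNReal.div_le_iff (by simp) (by simp)]; simpa using one_le_two)
  have hδη : δ + δ ≤ η := by
    rw [hδ, ENNReal.div_add_div_same]
    rw [ENNReal.div_le_iff (by simp) (by simp)]
    rw [← two_mul, mul_comm]
  -- compact set of measures capturing all X ∈ Z up to δ
  obtain ⟨A, hAcomp, hAZ⟩ := hZ δ hδ0
  -- compact set in S capturing all ν ∈ A up to δ
  obtain ⟨K, hKcomp, hK⟩ := compl_le_of_isCompact_family hAcomp hδ0 hδ1
  refine ⟨K, hKcomp, ?_⟩
  rintro m ⟨X, hXZ, hbar⟩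
  have hAmeas : MeasurableSet A := hAcomp.isClosed.measurableSet
  have hKmeas : MeasurableSet K := hKcomp.isClosed.measurableSet
  -- bound the barycenter's mass on Kᶜ
  have hKc : (m : Measure S) Kᶜ ≤ η := by
    rw [hbar Kᶜ hKmeas.compl]
    calc ∫⁻ ν, (ν : Measure S) Kᶜ ∂(X : Measure (ProbabilityMeasure S))
        ≤ ∫⁻ ν, (A.indicator (fun _ => δ) ν + Aᶜ.indicator (fun _ => 1) ν)
            ∂(X : Measure (ProbabilityMeasure S)) := by
          apply lintegral_mono
          intro ν
          by_cases hν : ν ∈ A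
          · simp only [Set.indicator_of_mem hν,
              Set.indicator_of_notMem (show ν ∉ Aᶜ by simpa using hν), add_zero]
            exact hK ν hν
          · simp only [Set.indicator_of_notMem hν,
              Set.indicator_of_mem (show ν ∈ Aᶜ by simpa using hν), zero_add]
            exact prob_le_one
      _ = δ * (X : Measure (ProbabilityMeasure S)) A
            + 1 * (X : Measure (ProbabilityMeasure S)) Aᶜ := by
          rw [lintegral_add_left (measurable_const.indicator hAmeas),
            lintegral_indicator_const hAmeas, lintegral_indicator_const hAmeas.compl]
      _ ≤ δ * 1 + 1 * δ := by
          gcongr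
          · exact prob_le_one
          · rw [prob_compl_eq_one_sub hAmeas, tsub_le_iff_left]
            calc (1 : ℝ≥0∞) = 1 - δ + δ := (tsub_add_cancel_of_le hδ1).symm
              _ ≤ (X : Measure (ProbabilityMeasure S)) A + δ :=
                  add_le_add_left (hAZ X hXZ).le δ
      _ ≤ η := by simpa using hδη
  -- conclude
  have h1 : 1 - η ≤ (m : Measure S) K := by
    rw [tsub_le_iff_right]
    calc (1 : ℝ≥0∞) = (m : Measure S) K + (m : Measure S) Kᶜ := by
          rw [measure_add_measure_compl hKmeas, measure_univ]
      _ ≤ (m : Measure S) K + η := add_le_add_right hKc _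
  refine lt_of_lt_of_le ?_ h1
  rcases le_or_gt 1 ε with h | h
  · rw [tsub_eq_zero_of_le h]
    exact tsub_pos_of_lt hη1
  · rw [lt_tsub_iff_right]
    calc 1 - ε + η < 1 - ε + ε :=
        ENNReal.add_lt_add_left ((tsub_le_self.trans_lt ENNReal.one_lt_top).ne) hηε
      _ = 1 := tsub_add_cancel_of_le h.le
end

section
/- Let E be a Polish space and let κ : E → P(E) be a continuous (Feller) Markov transition kernel. Let (X_n)_{n≥0} be an E-valued Markov chain with kernel κ on a probability space with filtration (F_n), i.e., X_n is F_n-measurable and E[f(X_{n+1}) | F_n] = ∫ f(y) κ(dy|X_n) almost surely for every bounded continuous f : E → ℝ. If X_n converges almost surely to a random variable X_∞, then almost surely κ(·|X_∞) = δ_{X_∞}, i.e., X_∞ takes values in the set of absorbing states of the chain. -/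
open MeasureTheory Topology Filter BoundedContinuousFunction
open scoped ENNReal NNReal

section Aux

variable {E : Type*} [MeasurableSpace E] [TopologicalSpace E]

/-- For a continuous kernel, integration of a bounded continuous function is continuous. -/
lemma aux_integral_continuous [OpensMeasurableSpace E]
    (κ : E → ProbabilityMeasure E) (hκ : Continuous κ) (f : E →ᵇ ℝ) :
    Continuous fun x => ∫ y, f y ∂(κ x : Measure E) := by
  rw [continuous_iff_continuousAt]
  intro x
  exact (ProbabilityMeasure.tendsto_iff_forall_integral_tendsto.mp hκ.continuousAt) f

/-- A probability measure which is a.e. concentrated at a point is the Dirac measure. -/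
lemma aux_eq_dirac {μ : Measure E} [IsProbabilityMeasure μ] {x : E}
    [MeasurableSingletonClass E] (h : ∀ᵐ y ∂μ, y = x) : μ = Measure.dirac x := by
  refine Measure.ext fun s hs => ?_
  rw [Measure.dirac_apply' x hs]
  by_cases hxs : x ∈ s
  · have hc : μ sᶜ = 0 := by
      refine measure_mono_null (fun y hy => ?_) (ae_iff.mp h)
      simp only [Set.mem_setOf_eq]
      intro hyx
      exact hy (hyx ▸ hxs)
    have : μ s = 1 := (prob_compl_eq_zero_iff hs).mp hc
    rw [this, Set.indicator_of_mem hxs]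
    rfl
  · have hc : μ s = 0 := by
      refine measure_mono_null (fun y hy => ?_) (ae_iff.mp h)
      simp only [Set.mem_setOf_eq]
      intro hyx
      exact hxs (hyx ▸ hy)
    rw [hc, Set.indicator_of_notMem hxs]

end Aux

/-- The bounded continuous function `y ↦ min (dist y z) 1` on a metric space. -/
noncomputable def distBCF {E : Type*} [MetricSpace E] (z : E) : E →ᵇ ℝ :=
  BoundedContinuousFunction.mkOfBound
    ⟨fun y => min (dist y z) 1, ((continuous_id.dist continuous_const).min continuous_const)⟩ 1
    (fun a b => by
      simp only [ContinuousMap.coe_mk]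
      rw [Real.dist_eq]
      have h1 : (0:ℝ) ≤ min (dist a z) 1 := le_min dist_nonneg zero_le_one
      have h2 : (0:ℝ) ≤ min (dist b z) 1 := le_min dist_nonneg zero_le_one
      have h3 : min (dist a z) 1 ≤ 1 := min_le_right _ _
      have h4 : min (dist b z) 1 ≤ 1 := min_le_right _ _
      rw [abs_le]
      constructor <;> linarith)

@[simp] lemma distBCF_apply {E : Type*} [MetricSpace E] (z y : E) :
    distBCF z y = min (dist y z) 1 := rfl

private lemma aux_measSet_exists_tendsto {Ω E : Type*} (m : MeasurableSpace Ω)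
    [TopologicalSpace E] [PolishSpace E] [MeasurableSpace E] [OpensMeasurableSpace E]
    (X : ℕ → Ω → E) (hX : ∀ n, Measurable[m] (X n)) :
    MeasurableSet[m] {ω | ∃ c, Tendsto (fun n => X n ω) atTop (𝓝 c)} :=
  measurableSet_exists_tendsto hX

private lemma aux_Y {Ω E : Type*} (m : MeasurableSpace Ω)
    [TopologicalSpace E] [TopologicalSpace.PseudoMetrizableSpace E]
    [MeasurableSpace E] [BorelSpace E]
    (ν : @Measure Ω m) (X : ℕ → Ω → E) (hX : ∀ n, Measurable[m] (X n))
    (h : ∀ᵐ ω ∂ν, ∃ c, Tendsto (fun n => X n ω) atTop (𝓝 c)) :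
    ∃ Y, Measurable[m] Y ∧ ∀ᵐ ω ∂ν, Tendsto (fun n => X n ω) atTop (𝓝 (Y ω)) :=
  measurable_limit_of_tendsto_metrizable_ae (fun n => (hX n).aemeasurable) h

/-- The σ-algebra generated by a filtration. -/
private def filtSup {Ω : Type*} {m0 : MeasurableSpace Ω} (ℱ : Filtration ℕ m0) :
    MeasurableSpace Ω := ⨆ n, ℱ n

/-- Let `κ` be a Feller (continuous) Markov transition kernel on a Polish space `E` and let
`(X n)` be a Markov chain with kernel `κ`.  If `X n` converges almost surely to `X∞`, then
almost surely `κ(·|X∞) = δ_{X∞}`, i.e. `X∞` takes values in the set of absorbing states. -/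
theorem limit_is_absorbing_of_feller
    {E : Type*} [MeasurableSpace E] [TopologicalSpace E] [PolishSpace E] [BorelSpace E]
    (κ : E → ProbabilityMeasure E) (hκ : Continuous κ)
    {Ω : Type*} {m0 : MeasurableSpace Ω} (P : Measure Ω) [IsProbabilityMeasure P]
    (ℱ : Filtration ℕ m0)
    (X : ℕ → Ω → E)
    (hadp : ∀ n, Measurable[ℱ n] (X n))
    (hMarkov : ∀ (f : E →ᵇ ℝ) (n : ℕ),
      P[(fun ω => f (X (n + 1) ω)) | ℱ n]
        =ᵐ[P] fun ω => ∫ y, f y ∂(κ (X n ω) : Measure E))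
    (Xlim : Ω → E)
    (hconv : ∀ᵐ ω ∂P, Tendsto (fun n => X n ω) atTop (𝓝 (Xlim ω))) :
    ∀ᵐ ω ∂P, (κ (Xlim ω) : Measure E) = Measure.dirac (Xlim ω) := by
  have hΩ : Nonempty Ω := by
    by_contra h
    rw [not_nonempty_iff] at h
    have h1 : P Set.univ = 1 := measure_univ
    rw [Set.univ_eq_empty_iff.mpr h, measure_empty] at h1
    exact zero_ne_one h1
  haveI hE : Nonempty E := Nonempty.map (X 0) hΩ
  letI := TopologicalSpace.upgradeIsCompletelyMetrizable E
  have hm' : filtSup ℱ ≤ m0 := iSup_le fun n => ℱ.le n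
  have hXm : ∀ n, Measurable[filtSup ℱ] (X n) := fun n =>
    (hadp n).mono (le_iSup (fun n => (ℱ n : MeasurableSpace Ω)) n) le_rfl
  have hXm0 : ∀ n, Measurable[m0] (X n) := fun n => (hadp n).mono (ℱ.le n) le_rfl
  -- construct an `m'`-measurable version of the limit
  have hconvSet : MeasurableSet[filtSup ℱ] {ω | ∃ c, Tendsto (fun n => X n ω) atTop (𝓝 c)} :=
    aux_measSet_exists_tendsto (filtSup ℱ) X hXm
  have hconvTrim : ∀ᵐ ω ∂(P.trim hm'), ∃ c, Tendsto (fun n => X n ω) atTop (𝓝 c) := by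
    rw [ae_iff]
    have heq : {ω | ¬ ∃ c, Tendsto (fun n => X n ω) atTop (𝓝 c)}
        = {ω | ∃ c, Tendsto (fun n => X n ω) atTop (𝓝 c)}ᶜ := rfl
    rw [heq, trim_measurableSet_eq hm' hconvSet.compl]
    refine measure_mono_null (fun ω hω => ?_) (ae_iff.mp hconv)
    simp only [Set.mem_compl_iff, Set.mem_setOf_eq] at hω ⊢
    exact fun h => hω ⟨Xlim ω, h⟩
  obtain ⟨Y, hYmeas, hYtendsto⟩ := aux_Y (filtSup ℱ) (P.trim hm') X hXm hconvTrim
  have hYtend : ∀ᵐ ω ∂P, Tendsto (fun n => X n ω) atTop (𝓝 (Y ω)) :=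
    ae_of_ae_trim hm' hYtendsto
  have hYX : Y =ᵐ[P] Xlim := by
    filter_upwards [hYtend, hconv] with ω h1 h2 using tendsto_nhds_unique h1 h2
  -- the key step: for every bounded continuous `f`, a.s. `∫ f dκ(Y) = f(Y)`
  have key : ∀ f : E →ᵇ ℝ, ∀ᵐ ω ∂P, ∫ y, f y ∂(κ (Y ω) : Measure E) = f (Y ω) := by
    intro f
    set G : E → ℝ := fun x => ∫ y, f y ∂(κ x : Measure E) with hGdef
    have hGcont : Continuous G := aux_integral_continuous κ hκ f
    have hGbdd : ∀ x, ‖G x‖ ≤ ‖f‖ := fun x => by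
      calc ‖G x‖ ≤ ‖f‖ * ((κ x : Measure E) Set.univ).toReal :=
            norm_integral_le_of_norm_le_const (Eventually.of_forall fun y => f.norm_coe_le_norm y)
        _ = ‖f‖ := by simp
    have hintf : ∀ n, Integrable (fun ω => f (X n ω)) P := by
      intro n
      have hm : Measurable fun ω => f (X n ω) := f.continuous.measurable.comp (hXm0 n)
      exact ⟨hm.aestronglyMeasurable,
        HasFiniteIntegral.of_bounded (C := ‖f‖)
          (Eventually.of_forall fun ω => f.norm_coe_le_norm _)⟩
    have hintG : ∀ n, Integrable (fun ω => G (X n ω)) P := by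
      intro n
      have hm : Measurable fun ω => G (X n ω) := hGcont.measurable.comp (hXm0 n)
      exact ⟨hm.aestronglyMeasurable,
        HasFiniteIntegral.of_bounded (C := ‖f‖) (Eventually.of_forall fun ω => hGbdd _)⟩
    set D : Ω → ℝ := fun ω => f (Y ω) - G (Y ω) with hDdef
    have hDmeas : Measurable[filtSup ℱ] D := by
      have h1 : Measurable[filtSup ℱ] fun ω => f (Y ω) := f.continuous.measurable.comp hYmeas
      have h2 : Measurable[filtSup ℱ] fun ω => G (Y ω) := hGcont.measurable.comp hYmeas
      exact h1.sub h2
    have hDint : Integrable D P :=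
      ⟨(hDmeas.mono hm' le_rfl).aestronglyMeasurable,
        HasFiniteIntegral.of_bounded (C := ‖f‖ + ‖f‖) (Eventually.of_forall fun ω => by
          calc ‖f (Y ω) - G (Y ω)‖ ≤ ‖f (Y ω)‖ + ‖G (Y ω)‖ := norm_sub_le _ _
            _ ≤ ‖f‖ + ‖f‖ := add_le_add (f.norm_coe_le_norm _) (hGbdd _))⟩
    have hDtend : ∀ᵐ ω ∂P, Tendsto (fun k => f (X (k+1) ω) - G (X k ω)) atTop (𝓝 (D ω)) := by
      filter_upwards [hYtend] with ω hω
      exact ((f.continuous.tendsto _).comp (hω.comp (tendsto_add_atTop_nat 1))).sub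
        ((hGcont.tendsto _).comp hω)
    have hbasic : ∀ t : Set Ω, (∃ n, MeasurableSet[ℱ n] t) → ∫ ω in t, D ω ∂P = 0 := by
      rintro t ⟨n, ht⟩
      have hzero : ∀ k, n ≤ k → ∫ ω in t, (f (X (k+1) ω) - G (X k ω)) ∂P = 0 := by
        intro k hk
        have htk : MeasurableSet[ℱ k] t := ℱ.mono hk t ht
        rw [integral_sub ((hintf (k+1)).integrableOn) ((hintG k).integrableOn)]
        have h1 : ∫ ω in t, f (X (k+1) ω) ∂P = ∫ ω in t, G (X k ω) ∂P := by
          rw [← setIntegral_condExp (ℱ.le k) (hintf (k+1)) htk]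
          exact setIntegral_congr_ae (ℱ.le k t htk) ((hMarkov f k).mono fun ω hω _ => hω)
        rw [h1, sub_self]
      have hlim : Tendsto (fun k => ∫ ω in t, (f (X (k+1) ω) - G (X k ω)) ∂P) atTop
          (𝓝 (∫ ω in t, D ω ∂P)) := by
        refine tendsto_integral_of_dominated_convergence (fun _ => ‖f‖ + ‖f‖)
          (fun k => ((hintf (k+1)).sub (hintG k)).aestronglyMeasurable.restrict)
          (integrable_const _)
          (fun k => Eventually.of_forall fun ω => ?_)
          (ae_restrict_of_ae hDtend)
        calc ‖f (X (k+1) ω) - G (X k ω)‖ ≤ ‖f (X (k+1) ω)‖ + ‖G (X k ω)‖ := norm_sub_le _ _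
          _ ≤ ‖f‖ + ‖f‖ := add_le_add (f.norm_coe_le_norm _) (hGbdd _)
      exact tendsto_nhds_unique hlim (tendsto_atTop_of_eventually_const hzero)
    have hset : ∀ s : Set Ω, MeasurableSet[filtSup ℱ] s → ∫ ω in s, D ω ∂P = 0 := by
      intro s hs
      have heq : filtSup ℱ = MeasurableSpace.generateFrom {s | ∃ n, MeasurableSet[ℱ n] s} :=
        MeasurableSpace.measurableSpace_iSup_eq ℱ
      refine MeasurableSpace.induction_on_inter (m := filtSup ℱ)
        (C := fun t _ => ∫ ω in t, D ω ∂P = 0) heq ?_ ?_ ?_ ?_ ?_ s hs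
      · rintro u ⟨n, hu⟩ v ⟨m, hv⟩ -
        exact ⟨max n m, (ℱ.mono (le_max_left n m) u hu).inter (ℱ.mono (le_max_right n m) v hv)⟩
      · simp
      · exact fun t ht => hbasic t ht
      · intro t htm htC
        have hadd := integral_add_compl (hm' t htm) hDint
        have huniv : ∫ ω, D ω ∂P = 0 := by
          rw [← setIntegral_univ]
          exact hbasic Set.univ ⟨0, MeasurableSet.univ⟩
        rw [huniv] at hadd
        linarith
      · intro g hdis hgm hC
        rw [integral_iUnion (fun i => hm' _ (hgm i)) hdis hDint.integrableOn]
        simp [hC]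
    have hD0 : D =ᵐ[P] 0 := by
      refine ae_eq_of_forall_setIntegral_eq_of_sigmaFinite' hm'
        (fun s _ _ => hDint.integrableOn)
        (fun s _ _ => (integrable_zero _ _ _).integrableOn)
        (fun s hs _ => by rw [hset s hs]; simp)
        ⟨D, hDmeas.stronglyMeasurable, EventuallyEq.rfl⟩
        ⟨(0 : Ω → ℝ), @stronglyMeasurable_const _ _ (filtSup ℱ) _ 0, EventuallyEq.rfl⟩
    filter_upwards [hD0] with ω hω
    have : f (Y ω) - G (Y ω) = 0 := hω
    have := sub_eq_zero.mp this
    exact this.symm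
  -- assemble, using a countable dense family of test functions
  have key' : ∀ᵐ ω ∂P, ∀ k : ℕ,
      ∫ y, min (dist y (TopologicalSpace.denseSeq E k)) 1 ∂(κ (Xlim ω) : Measure E)
        = min (dist (Xlim ω) (TopologicalSpace.denseSeq E k)) 1 := by
    rw [ae_all_iff]
    intro k
    filter_upwards [key (distBCF (TopologicalSpace.denseSeq E k)), hYX] with ω h1 h2
    rw [← h2]
    simpa using h1
  filter_upwards [key'] with ω hω
  set x := Xlim ω with hxdef
  have hint : Integrable (fun y => min (dist y x) 1) (κ x : Measure E) :=
    ⟨((continuous_id.dist continuous_const).min continuous_const).aestronglyMeasurable,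
      HasFiniteIntegral.of_bounded (C := 1) (Eventually.of_forall fun y => by
        rw [Real.norm_eq_abs, abs_le]
        constructor
        · linarith [le_min (dist_nonneg (x := y) (y := x)) (zero_le_one (α := ℝ))]
        · exact min_le_right _ _)⟩
  have hintk : ∀ k : ℕ, Integrable (fun y => min (dist y (TopologicalSpace.denseSeq E k)) 1)
      (κ x : Measure E) := fun k =>
    ⟨((continuous_id.dist continuous_const).min continuous_const).aestronglyMeasurable,
      HasFiniteIntegral.of_bounded (C := 1) (Eventually.of_forall fun y => by
        rw [Real.norm_eq_abs, abs_le]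
        constructor
        · linarith [le_min (dist_nonneg (x := y) (y := TopologicalSpace.denseSeq E k))
            (zero_le_one (α := ℝ))]
        · exact min_le_right _ _)⟩
  have hnn : 0 ≤ ∫ y, min (dist y x) 1 ∂(κ x : Measure E) :=
    integral_nonneg fun y => le_min dist_nonneg zero_le_one
  have hub : ∀ k, ∫ y, min (dist y x) 1 ∂(κ x : Measure E)
      ≤ 2 * dist x (TopologicalSpace.denseSeq E k) := by
    intro k
    set z := TopologicalSpace.denseSeq E k with hzdef
    have hptw : ∀ y, min (dist y x) 1 ≤ min (dist y z) 1 + dist z x := by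
      intro y
      rcases le_total (dist y z) 1 with h | h
      · rw [min_eq_left h]
        calc min (dist y x) 1 ≤ dist y x := min_le_left _ _
          _ ≤ dist y z + dist z x := dist_triangle _ _ _
      · rw [min_eq_right h]
        have h0 : (0:ℝ) ≤ dist z x := dist_nonneg
        linarith [min_le_right (dist y x) (1:ℝ)]
    calc ∫ y, min (dist y x) 1 ∂(κ x : Measure E)
        ≤ ∫ y, (min (dist y z) 1 + dist z x) ∂(κ x : Measure E) :=
          integral_mono hint ((hintk k).add (integrable_const _)) hptw
      _ = (∫ y, min (dist y z) 1 ∂(κ x : Measure E)) + dist z x := by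
          rw [integral_add (hintk k) (integrable_const _), integral_const]
          simp
          rfl
      _ = min (dist x z) 1 + dist z x := by rw [hω k]
      _ ≤ dist x z + dist z x := add_le_add_left (min_le_left _ _) _
      _ = 2 * dist x z := by rw [dist_comm z x]; ring
  have hI0 : ∫ y, min (dist y x) 1 ∂(κ x : Measure E) = 0 := by
    rcases eq_or_lt_of_le hnn with h | h
    · exact h.symm
    · exfalso
      obtain ⟨k, hk⟩ := (TopologicalSpace.denseRange_denseSeq E).exists_dist_lt x
        (show 0 < (∫ y, min (dist y x) 1 ∂(κ x : Measure E)) / 4 by linarith)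
      have := hub k
      linarith
  have hae : ∀ᵐ y ∂(κ x : Measure E), y = x := by
    have h0 := (integral_eq_zero_iff_of_nonneg
      (fun y => le_min dist_nonneg zero_le_one) hint).mp hI0
    filter_upwards [h0] with y hy
    have hy' : min (dist y x) 1 = 0 := hy
    have h1 : dist y x = 0 := by
      rcases le_total (dist y x) 1 with h | h
      · rwa [min_eq_left h] at hy'
      · rw [min_eq_right h] at hy'
        norm_num at hy'
    exact dist_eq_zero.mp h1
  exact aux_eq_dirac hae
end

section
/- Let S be a Polish space and N ≥ 1. Let κ_N : P(S) → P(P(S)) be the bootstrap (empirical-measure) kernel: κ_N(μ) is the law of the empirical measure (1/N)∑_{i=1}^N δ_{X_i} of N i.i.d. samples X_1,…,X_N with common law μ, i.e., the pushforward of the product measure μ^{⊗N} on S^N under the map (x_1,…,x_N) ↦ (1/N)∑_{i=1}^N δ_{x_i}. Let (μ_n)_{n≥0} be a P(S)-valued Markov chain with kernel κ_N (with arbitrary initial distribution), on a probability space with filtration (F_n): μ_n is F_n-measurable and E[g(μ_{n+1}) | F_n] = ∫ g(ν) κ_N(μ_n)(dν) almost surely for all bounded measurable g : P(S) → ℝ.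 Then there exists an S-valued random variable γ such that μ_n → δ_γ almost surely in the topology of weak convergence on P(S). -/
open MeasureTheory Topology Filter BoundedContinuousFunction
open scoped ENNReal NNReal

/-- The empirical measure `(1/N) ∑ᵢ δ_{x i}` of a tuple `x : Fin N → S`, as a probability
measure (for `N ≥ 1`). -/
noncomputable def empiricalMeasure {S : Type*} [MeasurableSpace S] {N : ℕ} (hN : 0 < N)
    (x : Fin N → S) : ProbabilityMeasure S :=
  ⟨(N : ℝ≥0∞)⁻¹ • ∑ i, Measure.dirac (x i), by
    constructor
    have h : (∑ i : Fin N, Measure.dirac (x i)) Set.univ = N := by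
      rw [Measure.finset_sum_apply]
      simp
    rw [Measure.smul_apply, h, smul_eq_mul]
    exact ENNReal.inv_mul_cancel (by exact_mod_cast hN.ne') (by simp)⟩

theorem integral_empiricalMeasure {S : Type*} [MeasurableSpace S] [TopologicalSpace S]
    [OpensMeasurableSpace S] {N : ℕ} (hN : 0 < N) (y : Fin N → S) (f : S →ᵇ ℝ) :
    ∫ a, f a ∂(empiricalMeasure hN y : Measure S) = (N : ℝ)⁻¹ * ∑ i, f (y i) := by
  change ∫ a, f a ∂((N : ℝ≥0∞)⁻¹ • ∑ i, Measure.dirac (y i)) = _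
  rw [integral_smul_measure, integral_finset_sum_measure]
  · simp only [ENNReal.toReal_inv, ENNReal.toReal_natCast, smul_eq_mul]
    congr 1
    refine Finset.sum_congr rfl fun i _ => ?_
    exact integral_dirac' _ _ f.continuous.stronglyMeasurable
  · intro i _
    exact f.integrable _

/-- The map `x ↦ (1/N) ∑ᵢ δ_{x i}` is continuous into `P(S)` with the topology of weak
convergence. -/
theorem continuous_empiricalMeasure {S : Type*} [MeasurableSpace S] [TopologicalSpace S]
    [OpensMeasurableSpace S] {N : ℕ} (hN : 0 < N) :
    Continuous (empiricalMeasure (S := S) hN) := by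
  rw [continuous_iff_continuousAt]
  intro x
  unfold ContinuousAt
  rw [MeasureTheory.ProbabilityMeasure.tendsto_iff_forall_integral_tendsto]
  intro f
  simp only [fun y : Fin N → S => integral_empiricalMeasure hN y f]
  apply Filter.Tendsto.const_mul
  apply tendsto_finset_sum
  intro i _
  exact (f.continuous.comp (continuous_apply i)).continuousAt

/-- The bootstrap (empirical-measure) kernel `κ_N : P(S) → P(P(S))`: `bootstrapKernel hN μ`
is the law of the empirical measure of `N` i.i.d. samples from `μ`, i.e. the pushforward of
the product measure `μ^{⊗N}` on `S^N` under the map `x ↦ (1/N) ∑ᵢ δ_{x i}`. -/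
noncomputable def bootstrapKernel {S : Type*} [MeasurableSpace S] [TopologicalSpace S]
    [PolishSpace S] [BorelSpace S]
    [MeasurableSpace (ProbabilityMeasure S)] [BorelSpace (ProbabilityMeasure S)]
    {N : ℕ} (hN : 0 < N) (μ : ProbabilityMeasure S) :
    ProbabilityMeasure (ProbabilityMeasure S) :=
  ⟨(Measure.pi fun _ : Fin N => (μ : Measure S)).map (empiricalMeasure hN),
    MeasureTheory.Measure.isProbabilityMeasure_map
      (continuous_empiricalMeasure hN).measurable.aemeasurable⟩

/-! ### Auxiliary definitions and lemmas -/

open Set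

/-- Dirac measure as a probability measure. -/
noncomputable def diracPM {S : Type*} [MeasurableSpace S] (x : S) : ProbabilityMeasure S :=
  ⟨Measure.dirac x, inferInstance⟩

open MeasureTheory Topology Filter Set

section Meas
variable {S : Type*} [MeasurableSpace S] [TopologicalSpace S] [PolishSpace S] [BorelSpace S]
  [MeasurableSpace (ProbabilityMeasure S)] [BorelSpace (ProbabilityMeasure S)]

lemma mc_measurable_open {U : Set S} (hU : IsOpen U) :
    Measurable fun ν : ProbabilityMeasure S => (ν : Measure S) U := by
  letI := TopologicalSpace.upgradeIsCompletelyMetrizable S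
  have lsc : LowerSemicontinuous fun ν : ProbabilityMeasure S => (ν : Measure S) U := by
    intro ν y hy
    have hle : (ν : Measure S) U ≤ liminf (fun η : ProbabilityMeasure S => (η : Measure S) U) (𝓝 ν) :=
      ProbabilityMeasure.le_liminf_measure_open_of_tendsto tendsto_id hU
    exact eventually_lt_of_lt_liminf (lt_of_lt_of_le hy hle)
  exact lsc.measurable

lemma mc_measurable_apply {A : Set S} (hA : MeasurableSet A) :
    Measurable fun ν : ProbabilityMeasure S => (ν : Measure S) A := by
  have hgen : (inferInstance : MeasurableSpace S) = MeasurableSpace.generateFrom {U : Set S | IsOpen U} := by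
    rw [BorelSpace.measurable_eq (α := S)]; rfl
  refine MeasurableSpace.induction_on_inter (C := fun A _ => Measurable fun ν : ProbabilityMeasure S => (ν : Measure S) A) hgen ?_ ?_ ?_ ?_ ?_ _ hA
  · exact fun s hs t ht _ => hs.inter ht
  · simp
  · exact fun t ht => mc_measurable_open ht
  · intro t htm hmeas
    have : (fun ν : ProbabilityMeasure S => (ν : Measure S) tᶜ)
        = fun ν : ProbabilityMeasure S => 1 - (ν : Measure S) t := by
      funext ν
      rw [measure_compl htm (measure_ne_top _ _), measure_univ]
    rw [this]
    exact Measurable.const_sub hmeas _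
  · intro f hdisj hfm hmeas
    have : (fun ν : ProbabilityMeasure S => (ν : Measure S) (⋃ i, f i))
        = fun ν : ProbabilityMeasure S => ∑' i, (ν : Measure S) (f i) := by
      funext ν; exact measure_iUnion hdisj hfm
    rw [this]
    exact Measurable.ennreal_tsum hmeas

lemma mc_measurable_pi {N : ℕ} {A : Set (Fin N → S)} (hA : MeasurableSet A) :
    Measurable fun ν : ProbabilityMeasure S =>
      Measure.pi (fun _ : Fin N => (ν : Measure S)) A := by
  have hgen : (inferInstance : MeasurableSpace (Fin N → S))
      = MeasurableSpace.generateFrom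
        (Set.pi univ '' Set.pi univ fun _ : Fin N => { s : Set S | MeasurableSet s }) :=
    generateFrom_pi.symm
  refine MeasurableSpace.induction_on_inter (C := fun A _ => Measurable fun ν : ProbabilityMeasure S => Measure.pi (fun _ : Fin N => (ν : Measure S)) A) hgen isPiSystem_pi ?_ ?_ ?_ ?_ _ hA
  · simp
  · rintro t ⟨s, hs, rfl⟩
    have hs' : ∀ i, MeasurableSet (s i) := fun i => hs i (mem_univ i)
    have : (fun ν : ProbabilityMeasure S => Measure.pi (fun _ : Fin N => (ν : Measure S)) (univ.pi s))
        = fun ν : ProbabilityMeasure S => ∏ i, (ν : Measure S) (s i) := by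
      funext ν; exact Measure.pi_pi _ _
    rw [this]
    exact Finset.measurable_prod _ fun i _ => mc_measurable_apply (hs' i)
  · intro t htm hmeas
    have : (fun ν : ProbabilityMeasure S => Measure.pi (fun _ : Fin N => (ν : Measure S)) tᶜ)
        = fun ν : ProbabilityMeasure S => 1 - Measure.pi (fun _ : Fin N => (ν : Measure S)) t := by
      funext ν
      rw [measure_compl htm (measure_ne_top _ _), measure_univ]
    rw [this]
    exact Measurable.const_sub hmeas _
  · intro f hdisj hfm hmeas
    have : (fun ν : ProbabilityMeasure S => Measure.pi (fun _ : Fin N => (ν : Measure S)) (⋃ i, f i))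
        = fun ν : ProbabilityMeasure S => ∑' i, Measure.pi (fun _ : Fin N => (ν : Measure S)) (f i) := by
      funext ν; exact measure_iUnion hdisj hfm
    rw [this]
    exact Measurable.ennreal_tsum hmeas

end Meas

section Crit
variable {S : Type*} [MeasurableSpace S] [TopologicalSpace S] [PolishSpace S] [BorelSpace S]

/-- A countable family of open sets such that a probability measure is Dirac iff it assigns
each of them measure `0` or `1`; moreover the family separates points. -/
lemma exists_dirac_criterion [Nonempty S] :
    ∃ C : ℕ → Set S, (∀ k, IsOpen (C k)) ∧
      (∀ ν : ProbabilityMeasure S,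
        (∀ k, (ν : Measure S) (C k) = 0 ∨ (ν : Measure S) (C k) = 1) ↔
          ∃ x : S, ν = diracPM x) ∧
      (∀ x y : S, x ≠ y → ∃ k, x ∈ C k ∧ y ∉ C k) := by
  letI := TopologicalSpace.upgradeIsCompletelyMetrizable S
  set s : ℕ → S := TopologicalSpace.denseSeq S with hs
  refine ⟨fun k => Metric.ball (s k.unpair.1) (1 / (k.unpair.2 + 1)), fun k => Metric.isOpen_ball,
    ?_, ?_⟩
  · intro ν
    constructor
    · intro hval
      -- for each m find a ball of radius 1/(m+1) with full measure
      have hfull : ∀ m : ℕ, ∃ j : ℕ, (ν : Measure S) (Metric.ball (s j) (1 / (m + 1))) = 1 := by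
        intro m
        by_contra hcon
        push_neg at hcon
        have hz : ∀ j : ℕ, (ν : Measure S) (Metric.ball (s j) (1 / (m + 1))) = 0 := by
          intro j
          rcases hval (Nat.pair j m) with h | h
          · simpa [Nat.unpair_pair] using h
          · exact absurd (by simpa [Nat.unpair_pair] using h) (hcon j)
        have hcover : (⋃ j : ℕ, Metric.ball (s j) (1 / (m + 1))) = univ := by
          apply eq_univ_of_forall
          intro x
          obtain ⟨j, hj⟩ := (TopologicalSpace.denseRange_denseSeq S).exists_dist_lt x
            (by positivity : (0:ℝ) < 1 / (m + 1))
          exact mem_iUnion.mpr ⟨j, by simpa [dist_comm] using hj⟩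
        have : (ν : Measure S) univ = 0 := by
          rw [← hcover]
          exact measure_iUnion_null hz
        simp at this
      choose j hj using hfull
      set D : ℕ → Set S := fun m => Metric.ball (s (j m)) (1 / (m + 1)) with hD
      have hDnull : ∀ m, (ν : Measure S) (D m)ᶜ = 0 := by
        intro m
        rw [measure_compl Metric.isOpen_ball.measurableSet (measure_ne_top _ _), measure_univ,
          hj m, tsub_self]
      have hInt : (ν : Measure S) (⋂ m, D m) = 1 := by
        have : (ν : Measure S) (⋂ m, D m)ᶜ = 0 := by
          rw [compl_iInter]
          exact measure_iUnion_null (fun m : ℕ => hDnull m)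
        have hmeasInt : MeasurableSet (⋂ m, D m) :=
          MeasurableSet.iInter fun m : ℕ => Metric.isOpen_ball.measurableSet
        have h2 := measure_compl hmeasInt (measure_ne_top (ν : Measure S) _)
        rw [this, measure_univ] at h2
        -- h2 : 0 = 1 - ν (⋂ m, D m)
        have hle : (ν : Measure S) (⋂ m, D m) ≤ 1 := prob_le_one
        have := tsub_eq_zero_iff_le.mp h2.symm
        exact le_antisymm hle this
      obtain ⟨x, hx⟩ : (⋂ m, D m).Nonempty := by
        apply nonempty_of_measure_ne_zero (μ := (ν : Measure S))
        rw [hInt]; exact one_ne_zero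
      have hsub : (⋂ m, D m) ⊆ {x} := by
        intro y hy
        have hdist : ∀ m : ℕ, dist x y < 2 / (m + 1) := by
          intro m
          have hxm := mem_iInter.mp hx m
          have hym := mem_iInter.mp hy m
          have := dist_triangle x (s (j m)) y
          rw [Metric.mem_ball, dist_comm] at hxm hym
          calc dist x y ≤ dist x (s (j m)) + dist (s (j m)) y := dist_triangle _ _ _
            _ < 1 / (m+1) + 1 / (m+1) := by
                rw [dist_comm x (s (j m))]
                exact add_lt_add hxm hym
            _ = 2 / (m+1) := by ring
        have hlim : Tendsto (fun m : ℕ => 2 / ((m : ℝ) + 1)) atTop (𝓝 0) := by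
          have : Tendsto (fun n : ℕ => 1 / ((n : ℝ) + 1)) atTop (𝓝 0) :=
            tendsto_one_div_add_atTop_nhds_zero_nat
          have h2 := this.const_mul (2:ℝ)
          simpa [div_eq_mul_inv, mul_comm] using h2
        have hle0 : dist x y ≤ 0 :=
          ge_of_tendsto' hlim fun m => (hdist m).le
        have hxy : x = y := dist_eq_zero.mp (le_antisymm hle0 dist_nonneg)
        simp [hxy.symm]
      have hxval : (ν : Measure S) {x} = 1 := by
        refine le_antisymm prob_le_one ?_
        rw [← hInt]
        exact measure_mono hsub
      refine ⟨x, ?_⟩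
      apply Subtype.ext
      apply Measure.ext
      intro A hAmeas
      show (ν : Measure S) A = (diracPM x : Measure S) A
      have hd : (diracPM x : Measure S) A = A.indicator 1 x := Measure.dirac_apply' _ hAmeas
      by_cases hxA : x ∈ A
      · have h1 : (ν : Measure S) A = 1 := le_antisymm prob_le_one
          (by rw [← hxval]; exact measure_mono (singleton_subset_iff.mpr hxA))
        rw [h1, hd, indicator_of_mem hxA]; rfl
      · have h0 : (ν : Measure S) A = 0 := by
          have hsub' : A ⊆ {x}ᶜ := by
            intro y hy
            simp only [mem_compl_iff, mem_singleton_iff]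
            rintro rfl
            exact hxA hy
          have hcx : (ν : Measure S) {x}ᶜ = 0 := by
            rw [measure_compl (measurableSet_singleton x) (measure_ne_top _ _), measure_univ,
              hxval, tsub_self]
          exact le_antisymm (hcx ▸ measure_mono hsub') zero_le
        rw [h0, hd, indicator_of_notMem hxA]
    · rintro ⟨x, rfl⟩ k
      have hd : (diracPM x : Measure S) (Metric.ball (s k.unpair.1) (1 / (k.unpair.2 + 1)))
          = (Metric.ball (s k.unpair.1) (1 / ((k.unpair.2 : ℝ) + 1))).indicator 1 x :=
        Measure.dirac_apply' _ Metric.isOpen_ball.measurableSet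
      by_cases hx : x ∈ Metric.ball (s k.unpair.1) (1 / ((k.unpair.2 : ℝ) + 1))
      · right
        rw [hd, indicator_of_mem hx]; rfl
      · left
        rw [hd, indicator_of_notMem hx]
  · intro x y hxy
    have hr : 0 < dist x y := dist_pos.mpr hxy
    obtain ⟨m, hm⟩ := exists_nat_one_div_lt (by positivity : (0:ℝ) < dist x y / 3)
    obtain ⟨jj, hjj⟩ := (TopologicalSpace.denseRange_denseSeq S).exists_dist_lt x
      (by positivity : (0:ℝ) < 1 / (m + 1))
    refine ⟨Nat.pair jj m, ?_, ?_⟩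
    · simpa [Nat.unpair_pair, dist_comm] using hjj
    · simp only [Nat.unpair_pair]
      rw [Metric.mem_ball, not_lt]
      have : dist x y ≤ dist x (s jj) + dist (s jj) y := dist_triangle _ _ _
      have h1 : dist x (s jj) < dist x y / 3 := lt_trans hjj (by exact_mod_cast hm)
      nlinarith [dist_comm (s jj) y ▸ (by linarith : dist x y - dist x (s jj) ≤ dist (s jj) y)]
end Crit

section Emp
variable {S : Type*} [MeasurableSpace S] [TopologicalSpace S] [PolishSpace S] [BorelSpace S]


variable {N : ℕ} (hN : 0 < N)

lemma emp_const (x : S) : empiricalMeasure hN (fun _ => x) = diracPM x := by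
  apply Subtype.ext
  show (N : ℝ≥0∞)⁻¹ • ∑ _i : Fin N, Measure.dirac x = Measure.dirac x
  ext A hA
  simp only [Measure.smul_apply, Measure.finset_sum_apply, Finset.sum_const, Finset.card_univ,
    Fintype.card_fin, nsmul_eq_mul, smul_eq_mul, ← mul_assoc]
  rw [ENNReal.inv_mul_cancel (by exact_mod_cast hN.ne') (by simp), one_mul]

lemma emp_singleton_ge (x : Fin N → S) (i₀ : Fin N) :
    (N : ℝ≥0∞)⁻¹ ≤ (empiricalMeasure hN x : Measure S) {x i₀} := by
  show (N : ℝ≥0∞)⁻¹ ≤ ((N : ℝ≥0∞)⁻¹ • ∑ i, Measure.dirac (x i)) {x i₀}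
  rw [Measure.smul_apply, Measure.finset_sum_apply, smul_eq_mul]
  calc (N : ℝ≥0∞)⁻¹ = (N : ℝ≥0∞)⁻¹ * Measure.dirac (x i₀) {x i₀} := by
        rw [Measure.dirac_apply_of_mem (Set.mem_singleton _), mul_one]
    _ ≤ _ := by
        gcongr
        exact Finset.single_le_sum (f := fun i => Measure.dirac (x i) {x i₀})
          (fun _ _ => zero_le) (Finset.mem_univ i₀)

lemma emp_eq_dirac_iff (x : Fin N → S) :
    (∃ y, empiricalMeasure hN x = diracPM y) ↔ ∀ i, x i = x ⟨0, hN⟩ := by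
  constructor
  · rintro ⟨y, hy⟩
    have key : ∀ i, x i = y := by
      intro i
      have hpos : (0:ℝ≥0∞) < (empiricalMeasure hN x : Measure S) {x i} :=
        lt_of_lt_of_le (by simp [pos_iff_ne_zero, hN.ne']) (emp_singleton_ge hN x i)
      rw [hy] at hpos
      have : (Measure.dirac y : Measure S) {x i} ≠ 0 := ne_of_gt hpos
      rw [Measure.dirac_apply' _ (measurableSet_singleton _)] at this
      by_contra hne
      rw [indicator_of_notMem (by simpa [eq_comm] using hne)] at this
      exact this rfl
    intro i; rw [key i, key ⟨0, hN⟩]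
  · intro h
    refine ⟨x ⟨0, hN⟩, ?_⟩
    have : x = fun _ => x ⟨0, hN⟩ := funext h
    rw [this, emp_const hN]

lemma pi_dirac {N : ℕ} (x : S) :
    Measure.pi (fun _ : Fin N => Measure.dirac x) = Measure.dirac (fun _ => x) := by
  refine (Measure.pi_eq ?_)
  intro s hs
  rw [Measure.dirac_apply' _ (MeasurableSet.univ_pi hs)]
  by_cases h : ∀ i, x ∈ s i
  · rw [indicator_of_mem (by simpa [Set.mem_univ_pi] using h)]
    have : ∀ i ∈ Finset.univ, Measure.dirac x (s i) = 1 := fun i _ =>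
      Measure.dirac_apply_of_mem (h i)
    rw [Finset.prod_congr rfl this]
    simp
  · push_neg at h
    obtain ⟨i, hi⟩ := h
    rw [indicator_of_notMem (by simp [Set.mem_univ_pi]; exact ⟨i, hi⟩)]
    refine (Finset.prod_eq_zero (Finset.mem_univ i) ?_).symm
    rw [Measure.dirac_apply' _ (hs i), indicator_of_notMem hi]

end Emp

lemma tower_mul {Ω : Type*} {m0 : MeasurableSpace Ω} {P : Measure Ω} [IsProbabilityMeasure P]
    {m : MeasurableSpace Ω} (hm : m ≤ m0)
    {X : Ω → ℝ} (hX : Measurable[m0] X) {CX : ℝ} (hXb : ∀ ω, |X ω| ≤ CX)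
    {Y : Ω → ℝ} (hYcond : P[X|m] =ᵐ[P] Y)
    {h : Ω → ℝ} (hh : StronglyMeasurable[m] h) {Ch : ℝ} (hhb : ∀ ω, |h ω| ≤ Ch) :
    ∫ ω, h ω * X ω ∂P = ∫ ω, h ω * Y ω ∂P := by
  have hXint : Integrable X P :=
    (integrable_const CX).mono' hX.aestronglyMeasurable
      (Filter.Eventually.of_forall fun ω => by simpa [Real.norm_eq_abs] using hXb ω)
  have hhmeas : Measurable[m0] h := (hh.measurable).mono hm le_rfl
  have hmulint : Integrable (h * X) P := by
    refine (integrable_const (Ch * CX)).mono'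
      ((hhmeas.mul hX).aestronglyMeasurable) (Filter.Eventually.of_forall fun ω => ?_)
    have h1 : (0:ℝ) ≤ Ch := le_trans (abs_nonneg _) (hhb ω)
    have h2 : (0:ℝ) ≤ CX := le_trans (abs_nonneg _) (hXb ω)
    simp only [Real.norm_eq_abs, Pi.mul_apply, abs_mul]
    exact mul_le_mul (hhb ω) (hXb ω) (abs_nonneg _) h1
  calc ∫ ω, h ω * X ω ∂P = ∫ ω, (h * X) ω ∂P := by rfl
    _ = ∫ ω, (P[h * X|m]) ω ∂P := (integral_condExp hm).symm
    _ = ∫ ω, h ω * Y ω ∂P := by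
        refine integral_congr_ae ?_
        have h1 := condExp_mul_of_stronglyMeasurable_left hh hmulint hXint
        filter_upwards [h1, hYcond] with ω hω1 hω2
        rw [hω1]
        simp only [Pi.mul_apply]
        rw [hω2]

section Kernel
variable {S : Type*} [MeasurableSpace S] [TopologicalSpace S] [PolishSpace S] [BorelSpace S]
  [MeasurableSpace (ProbabilityMeasure S)] [BorelSpace (ProbabilityMeasure S)]
  {N : ℕ} (hN : 0 < N)

lemma bootstrapKernel_apply (ν : ProbabilityMeasure S) {B : Set (ProbabilityMeasure S)}
    (hB : MeasurableSet B) :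
    (bootstrapKernel hN ν : Measure (ProbabilityMeasure S)) B
      = Measure.pi (fun _ : Fin N => (ν : Measure S)) (empiricalMeasure hN ⁻¹' B) :=
  Measure.map_apply (continuous_empiricalMeasure hN).measurable hB

lemma bootstrapKernel_dirac (x : S) :
    (bootstrapKernel hN (diracPM x) : Measure (ProbabilityMeasure S))
      = Measure.dirac (diracPM x) := by
  show (Measure.pi fun _ : Fin N => (diracPM x : Measure S)).map (empiricalMeasure hN)
      = Measure.dirac (diracPM x)
  have : (diracPM x : Measure S) = Measure.dirac x := rfl
  rw [this, pi_dirac, Measure.map_dirac' (continuous_empiricalMeasure hN).measurable,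
    emp_const hN]

end Kernel

/-- Model collapse for purely generative recursive training: a Markov chain `(μ n)` on `P(S)`
with the bootstrap kernel `κ_N` converges almost surely, in the topology of weak convergence,
to a (random) Dirac measure `δ_γ` for some `S`-valued random variable `γ`. -/
theorem model_collapse
    {S : Type*} [MeasurableSpace S] [TopologicalSpace S] [PolishSpace S] [BorelSpace S]
    [MeasurableSpace (ProbabilityMeasure S)] [BorelSpace (ProbabilityMeasure S)]
    {N : ℕ} (hN : 0 < N)
    {Ω : Type*} {m0 : MeasurableSpace Ω} (P : Measure Ω) [IsProbabilityMeasure P]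
    (ℱ : Filtration ℕ m0)
    (μ : ℕ → Ω → ProbabilityMeasure S)
    (hadp : ∀ n, Measurable[ℱ n] (μ n))
    (hMarkov : ∀ (n : ℕ) (g : ProbabilityMeasure S → ℝ), Measurable g →
      (∃ C : ℝ, ∀ ν, |g ν| ≤ C) →
      P[(fun ω => g (μ (n + 1) ω)) | ℱ n]
        =ᵐ[P] fun ω => ∫ ν, g ν ∂(bootstrapKernel hN (μ n ω) :
          Measure (ProbabilityMeasure S))) :
    ∃ γ : Ω → S, ∀ᵐ ω ∂P,
      Tendsto (fun n => μ n ω) atTop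
        (𝓝 (⟨Measure.dirac (γ ω), inferInstance⟩ : ProbabilityMeasure S)) := by
  classical
  -- nonemptiness of `Ω` and `S`
  haveI hΩne : Nonempty Ω := by
    by_contra hne
    rw [not_nonempty_iff] at hne
    have h1 : P Set.univ = 1 := measure_univ
    rw [Set.univ_eq_empty_iff.mpr hne, measure_empty] at h1
    exact zero_ne_one h1
  haveI hSne : Nonempty S := by
    obtain ⟨ω⟩ := hΩne
    by_contra hne
    rw [not_nonempty_iff] at hne
    have h1 : (μ 0 ω : Measure S) Set.univ = 1 := measure_univ
    rw [Set.univ_eq_empty_iff.mpr hne, measure_empty] at h1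
    exact zero_ne_one h1
  -- the countable family of open sets detecting Dirac measures
  obtain ⟨C, hCopen, hCcrit, hCsep⟩ := exists_dirac_criterion (S := S)
  set Dset : Set (ProbabilityMeasure S) :=
    {ν | ∀ k, (ν : Measure S) (C k) = 0 ∨ (ν : Measure S) (C k) = 1} with hDset_def
  have hDmeas : MeasurableSet Dset := by
    have hD2 : Dset = ⋂ k, ((fun ν : ProbabilityMeasure S => (ν : Measure S) (C k)) ⁻¹'
        ({0} ∪ {1})) := by
      ext ν
      simp only [hDset_def, Set.mem_setOf_eq, Set.mem_iInter, Set.mem_preimage,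
        Set.mem_union, Set.mem_singleton_iff]
    rw [hD2]
    exact MeasurableSet.iInter fun k => (mc_measurable_open (hCopen k))
      ((measurableSet_singleton 0).union (measurableSet_singleton 1))
  have hDdirac : ∀ ν ∈ Dset, ∃ x : S, ν = diracPM x := fun ν hν => (hCcrit ν).mp hν
  have hdiracD : ∀ x : S, diracPM x ∈ Dset := fun x => (hCcrit _).mpr ⟨x, rfl⟩
  -- the diagonal in `S^N`
  set i0 : Fin N := ⟨0, hN⟩ with hi0
  set Δ : Set (Fin N → S) := {y | ∀ i, y i = y i0} with hΔdef
  have hΔmeas : MeasurableSet Δ := by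
    have h1 : Δ = ⋂ i, {y : Fin N → S | y i = y i0} := by
      ext y; simp [hΔdef, Set.mem_iInter]
    rw [h1]
    exact MeasurableSet.iInter fun i =>
      (isClosed_eq (continuous_apply i) (continuous_apply i0)).measurableSet
  have hpre : empiricalMeasure hN ⁻¹' Dset = Δ := by
    ext x
    simp only [Set.mem_preimage, hΔdef, Set.mem_setOf_eq]
    rw [show (empiricalMeasure hN x ∈ Dset) ↔ (∃ y, empiricalMeasure hN x = diracPM y) from
      hCcrit (empiricalMeasure hN x)]
    exact emp_eq_dirac_iff hN x
  -- the diagonal mass function ψ and the absorption probability lower bound c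
  set ψ : ProbabilityMeasure S → ℝ≥0∞ :=
    fun ν => Measure.pi (fun _ : Fin N => (ν : Measure S)) Δ with hψdef
  have hψmeas : Measurable ψ := mc_measurable_pi hΔmeas
  set c : ℝ≥0∞ := ((N : ℝ≥0∞)⁻¹) ^ N with hcdef
  have hc0 : c ≠ 0 := by
    apply pow_ne_zero
    exact ENNReal.inv_ne_zero.mpr (ENNReal.natCast_ne_top N)
  have hctop : c ≠ ∞ := by
    apply ENNReal.pow_ne_top
    exact ENNReal.inv_ne_top.mpr (by exact_mod_cast hN.ne')
  have hc_le_one : c ≤ 1 := by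
    apply pow_le_one'
    rw [ENNReal.inv_le_one]
    exact_mod_cast hN
  have hψemp : ∀ x : Fin N → S, c ≤ ψ (empiricalMeasure hN x) := by
    intro x
    have hsub : Set.univ.pi (fun _ : Fin N => ({x i0} : Set S)) ⊆ Δ := by
      intro y hy i
      have h1 := hy i (Set.mem_univ i)
      have h2 := hy i0 (Set.mem_univ i0)
      simp only [Set.mem_singleton_iff] at h1 h2
      rw [h1, h2]
    calc c = ∏ _i : Fin N, (N : ℝ≥0∞)⁻¹ := by
          rw [Finset.prod_const, Finset.card_univ, Fintype.card_fin]
      _ ≤ ∏ _i : Fin N, (empiricalMeasure hN x : Measure S) {x i0} :=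
          Finset.prod_le_prod' fun i _ => emp_singleton_ge hN x i0
      _ = Measure.pi (fun _ : Fin N => (empiricalMeasure hN x : Measure S))
            (Set.univ.pi fun _ => {x i0}) := (Measure.pi_pi _ _).symm
      _ ≤ ψ (empiricalMeasure hN x) := measure_mono hsub
  set W : Set (ProbabilityMeasure S) := ψ ⁻¹' (Set.Ici c) with hWdef
  have hWmeas : MeasurableSet W := hψmeas measurableSet_Ici
  have hbkW : ∀ ν : ProbabilityMeasure S,
      (bootstrapKernel hN ν : Measure (ProbabilityMeasure S)) Wᶜ = 0 := by
    intro ν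
    rw [bootstrapKernel_apply hN ν hWmeas.compl]
    have hemp : empiricalMeasure hN ⁻¹' Wᶜ = (∅ : Set (Fin N → S)) :=
      Set.eq_empty_iff_forall_notMem.mpr fun x hx => hx (hψemp x)
    rw [hemp, measure_empty]
  have hbkD : ∀ ν ∈ Dset,
      (bootstrapKernel hN ν : Measure (ProbabilityMeasure S)) Dsetᶜ = 0 := by
    rintro ν hν
    obtain ⟨x, rfl⟩ := hDdirac ν hν
    rw [bootstrapKernel_dirac hN x, Measure.dirac_apply' _ hDmeas.compl,
      Set.indicator_of_notMem (by simpa using hdiracD x)]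
  have hbkDW : ∀ ν ∈ W,
      (bootstrapKernel hN ν : Measure (ProbabilityMeasure S)) Dsetᶜ ≤ 1 - c := by
    intro ν hν
    rw [bootstrapKernel_apply hN ν hDmeas.compl, Set.preimage_compl, hpre,
      measure_compl hΔmeas (measure_ne_top _ _), measure_univ]
    exact tsub_le_tsub_left hν _
  -- probabilistic preliminaries
  have hμm : ∀ n, Measurable[m0] (μ n) := fun n => (hadp n).mono (ℱ.le n) le_rfl
  have hind_comp : ∀ (B : Set (ProbabilityMeasure S)) (n : ℕ),
      (fun ω => B.indicator (fun _ => (1:ℝ)) (μ n ω))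
        = (μ n ⁻¹' B).indicator (fun _ => (1:ℝ)) := by
    intro B n; funext ω
    by_cases h : μ n ω ∈ B
    · rw [Set.indicator_of_mem h, Set.indicator_of_mem (show ω ∈ μ n ⁻¹' B from h)]
    · rw [Set.indicator_of_notMem h,
        Set.indicator_of_notMem (show ω ∉ μ n ⁻¹' B from h)]
  have hind_bound : ∀ (B : Set (ProbabilityMeasure S)) (ν : ProbabilityMeasure S),
      |B.indicator (fun _ => (1:ℝ)) ν| ≤ 1 := by
    intro B ν
    by_cases h : ν ∈ B
    · simp [Set.indicator_of_mem h]
    · simp [Set.indicator_of_notMem h]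
  have hind_meas : ∀ {B : Set (ProbabilityMeasure S)}, MeasurableSet B →
      Measurable (B.indicator (fun _ => (1:ℝ))) := fun hB => measurable_const.indicator hB
  have hint_comp : ∀ (n : ℕ) (g : ProbabilityMeasure S → ℝ), Measurable g → ∀ Cg : ℝ,
      (∀ ν, |g ν| ≤ Cg) → Integrable (fun ω => g (μ n ω)) P := by
    intro n g hg Cg hgb
    exact (integrable_const Cg).mono' ((hg.comp (hμm n)).aestronglyMeasurable)
      (Filter.Eventually.of_forall fun ω => by simpa [Real.norm_eq_abs] using hgb _)
  have tower : ∀ (n : ℕ) (g : ProbabilityMeasure S → ℝ), Measurable g → ∀ (Cg : ℝ),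
      (∀ ν, |g ν| ≤ Cg) → ∀ (h : Ω → ℝ), StronglyMeasurable[ℱ n] h → ∀ (Ch : ℝ),
      (∀ ω, |h ω| ≤ Ch) →
      ∫ ω, h ω * g (μ (n+1) ω) ∂P
        = ∫ ω, h ω * ∫ ν, g ν ∂(bootstrapKernel hN (μ n ω) :
            Measure (ProbabilityMeasure S)) ∂P := by
    intro n g hg Cg hgb h hh Ch hhb
    exact tower_mul (ℱ.le n) (hg.comp (hμm (n+1))) (fun ω => hgb _)
      (hMarkov n g hg ⟨Cg, hgb⟩) hh hhb
  have tower1 : ∀ (n : ℕ) (g : ProbabilityMeasure S → ℝ), Measurable g → ∀ (Cg : ℝ),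
      (∀ ν, |g ν| ≤ Cg) →
      ∫ ω, g (μ (n+1) ω) ∂P
        = ∫ ω, ∫ ν, g ν ∂(bootstrapKernel hN (μ n ω) :
            Measure (ProbabilityMeasure S)) ∂P := by
    intro n g hg Cg hgb
    have h1 := tower n g hg Cg hgb (fun _ => 1) stronglyMeasurable_const 1 (by norm_num)
    simpa using h1
  have hker_ind : ∀ (ν₀ : ProbabilityMeasure S) {B : Set (ProbabilityMeasure S)},
      MeasurableSet B →
      ∫ ν, B.indicator (fun _ => (1:ℝ)) ν ∂(bootstrapKernel hN ν₀ :
          Measure (ProbabilityMeasure S))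
        = ((bootstrapKernel hN ν₀ : Measure (ProbabilityMeasure S)) B).toReal := by
    intro ν₀ B hB
    rw [integral_indicator_const (1:ℝ) hB, smul_eq_mul, mul_one]; rfl
  have hP_ind : ∀ (n : ℕ) {B : Set (ProbabilityMeasure S)}, MeasurableSet B →
      ∫ ω, B.indicator (fun _ => (1:ℝ)) (μ n ω) ∂P = (P (μ n ⁻¹' B)).toReal := by
    intro n B hB
    rw [hind_comp B n, integral_indicator_const (1:ℝ) ((hμm n) hB)]; simp; rfl
  -- Step A: for `n ≥ 1`, a.s. `μ n ∈ W`
  have hWa : ∀ n : ℕ, P (μ (n+1) ⁻¹' Wᶜ) = 0 := by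
    intro n
    have h1 := tower1 n _ (hind_meas hWmeas.compl) 1 (hind_bound _)
    rw [hP_ind (n+1) hWmeas.compl] at h1
    have h2 : ∀ ω : Ω, ∫ ν, Wᶜ.indicator (fun _ => (1:ℝ)) ν
        ∂(bootstrapKernel hN (μ n ω) : Measure (ProbabilityMeasure S)) = 0 := by
      intro ω; rw [hker_ind _ hWmeas.compl, hbkW, ENNReal.toReal_zero]
    simp only [h2, integral_zero] at h1
    rcases (ENNReal.toReal_eq_zero_iff _).mp h1 with h | h
    · exact h
    · exact absurd h (measure_ne_top P _)
  have hW_ae : ∀ n : ℕ, ∀ᵐ ω ∂P, μ (n+1) ω ∈ W := by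
    intro n
    rw [ae_iff]
    exact hWa n
  -- Step B: geometric decay of the probability of not being Dirac
  set q : ℝ := 1 - c.toReal with hqdef
  have hcR_pos : 0 < c.toReal := ENNReal.toReal_pos hc0 hctop
  have hcR_le1 : c.toReal ≤ 1 := by
    calc c.toReal ≤ (1:ℝ≥0∞).toReal := ENNReal.toReal_mono ENNReal.one_ne_top hc_le_one
      _ = 1 := by simp
  have hq0 : 0 ≤ q := by rw [hqdef]; linarith
  have hq1 : q < 1 := by rw [hqdef]; linarith
  have hrec : ∀ n : ℕ, (P (μ (n+2) ⁻¹' Dsetᶜ)).toReal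
      ≤ q * (P (μ (n+1) ⁻¹' Dsetᶜ)).toReal := by
    intro n
    have hXmeas := hind_meas hDmeas.compl
    have hcond := hMarkov (n+1) _ hXmeas ⟨1, hind_bound _⟩
    have hLHS : (P (μ (n+2) ⁻¹' Dsetᶜ)).toReal
        = ∫ ω, (P[(fun ω => Dsetᶜ.indicator (fun _ => (1:ℝ)) (μ (n+2) ω)) | ℱ (n+1)]) ω ∂P := by
      rw [integral_condExp (ℱ.le (n+1))]
      exact (hP_ind (n+2) hDmeas.compl).symm
    have hae : P[(fun ω => Dsetᶜ.indicator (fun _ => (1:ℝ)) (μ (n+2) ω)) | ℱ (n+1)]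
        ≤ᵐ[P] fun ω => q * (Dsetᶜ.indicator (fun _ => (1:ℝ)) (μ (n+1) ω)) := by
      filter_upwards [hcond, hW_ae n] with ω h1 h2
      rw [h1, hker_ind _ hDmeas.compl]
      by_cases hD : μ (n+1) ω ∈ Dset
      · rw [hbkD _ hD, ENNReal.toReal_zero,
          Set.indicator_of_notMem (show μ (n+1) ω ∉ Dsetᶜ by simpa using hD)]
        simp
      · rw [Set.indicator_of_mem (show μ (n+1) ω ∈ Dsetᶜ from hD), mul_one]
        have h3 := hbkDW _ h2
        have h4 : ((bootstrapKernel hN (μ (n+1) ω) :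
              Measure (ProbabilityMeasure S)) Dsetᶜ).toReal ≤ ((1:ℝ≥0∞) - c).toReal :=
          ENNReal.toReal_mono (lt_of_le_of_lt tsub_le_self ENNReal.one_lt_top).ne h3
        rwa [ENNReal.toReal_sub_of_le hc_le_one ENNReal.one_ne_top, ENNReal.toReal_one] at h4
    have hRHSint : Integrable
        (fun ω => q * (Dsetᶜ.indicator (fun _ => (1:ℝ)) (μ (n+1) ω))) P :=
      (hint_comp (n+1) _ hXmeas 1 (hind_bound _)).const_mul q
    calc (P (μ (n+2) ⁻¹' Dsetᶜ)).toReal = _ := hLHS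
      _ ≤ ∫ ω, q * (Dsetᶜ.indicator (fun _ => (1:ℝ)) (μ (n+1) ω)) ∂P :=
          integral_mono_ae integrable_condExp hRHSint hae
      _ = q * (P (μ (n+1) ⁻¹' Dsetᶜ)).toReal := by
          rw [integral_const_mul q, hP_ind (n+1) hDmeas.compl]
  -- Step C: Borel–Cantelli
  have hgeom : ∀ k : ℕ, (P (μ (k+1) ⁻¹' Dsetᶜ)).toReal ≤ q ^ k := by
    intro k
    induction k with
    | zero =>
      have h1 : P (μ 1 ⁻¹' Dsetᶜ) ≤ 1 := prob_le_one
      calc (P (μ 1 ⁻¹' Dsetᶜ)).toReal ≤ (1:ℝ≥0∞).toReal :=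
          ENNReal.toReal_mono ENNReal.one_ne_top h1
        _ = q ^ 0 := by simp
    | succ k ih =>
      calc (P (μ (k+2) ⁻¹' Dsetᶜ)).toReal ≤ q * (P (μ (k+1) ⁻¹' Dsetᶜ)).toReal := hrec k
        _ ≤ q * q ^ k := mul_le_mul_of_nonneg_left ih hq0
        _ = q ^ (k+1) := by ring
  have hsum : (∑' n, P (μ n ⁻¹' Dsetᶜ)) ≠ ∞ := by
    have hb : ∀ n : ℕ, P (μ n ⁻¹' Dsetᶜ) ≤ ENNReal.ofReal (q ^ (n - 1)) := by
      intro n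
      cases n with
      | zero => simpa using (prob_le_one : P (μ 0 ⁻¹' Dsetᶜ) ≤ 1)
      | succ k =>
        have h1 : P (μ (k+1) ⁻¹' Dsetᶜ)
            = ENNReal.ofReal ((P (μ (k+1) ⁻¹' Dsetᶜ)).toReal) :=
          (ENNReal.ofReal_toReal (measure_ne_top _ _)).symm
        rw [h1]
        exact ENNReal.ofReal_le_ofReal (by simpa using hgeom k)
    have hsummable : Summable fun n : ℕ => q ^ (n - 1) := by
      rw [← summable_nat_add_iff 1]
      simpa using summable_geometric_of_lt_one hq0 hq1
    have hlt : (∑' n, P (μ n ⁻¹' Dsetᶜ)) < ∞ := by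
      calc (∑' n, P (μ n ⁻¹' Dsetᶜ)) ≤ ∑' n : ℕ, ENNReal.ofReal (q ^ (n-1)) :=
          ENNReal.tsum_le_tsum hb
        _ = ENNReal.ofReal (∑' n : ℕ, q ^ (n-1)) :=
          (ENNReal.ofReal_tsum_of_nonneg (fun n => pow_nonneg hq0 _) hsummable).symm
        _ < ∞ := ENNReal.ofReal_lt_top
    exact hlt.ne
  have hBC : ∀ᵐ ω ∂P, ∀ᶠ n in atTop, μ n ω ∈ Dset := by
    filter_upwards [ae_eventually_notMem hsum] with ω hω
    filter_upwards [hω] with n hn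
    simpa using hn
  -- Step D: on the Dirac set the chain is a.s. frozen (testing against each `C k`)
  have hstab : ∀ (n k : ℕ), ∀ᵐ ω ∂P, μ n ω ∈ Dset →
      ((μ (n+1) ω : Measure S) (C k)).toReal = ((μ n ω : Measure S) (C k)).toReal := by
    intro n k
    set e : ProbabilityMeasure S → ℝ := fun ν => ((ν : Measure S) (C k)).toReal with hedef
    have hemeas : Measurable e := (mc_measurable_open (hCopen k)).ennreal_toReal
    have hebound : ∀ ν, |e ν| ≤ 1 := by
      intro ν
      rw [abs_of_nonneg ENNReal.toReal_nonneg]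
      calc ((ν : Measure S) (C k)).toReal ≤ (1:ℝ≥0∞).toReal :=
          ENNReal.toReal_mono ENNReal.one_ne_top prob_le_one
        _ = 1 := by simp
    have habs : ∀ a b : ℝ, |a| ≤ 1 → |b| ≤ 1 → |a * b| ≤ 1 := by
      intro a b ha hb
      rw [abs_mul]
      calc |a| * |b| ≤ 1 * 1 := mul_le_mul ha hb (abs_nonneg _) zero_le_one
        _ = 1 := by ring
    have heebound : ∀ ν, |e ν * e ν| ≤ 1 := fun ν => habs _ _ (hebound ν) (hebound ν)
    set A : Set Ω := μ n ⁻¹' Dset with hAdef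
    have hAmeas : MeasurableSet[ℱ n] A := (hadp n) hDmeas
    set h1 : Ω → ℝ := A.indicator (fun _ => (1:ℝ)) with h1def
    have h1sm : StronglyMeasurable[ℱ n] h1 := stronglyMeasurable_const.indicator hAmeas
    have mh1 : Measurable[m0] h1 := measurable_const.indicator ((hμm n) hDmeas)
    have h1b : ∀ ω, |h1 ω| ≤ 1 := by
      intro ω; by_cases h : ω ∈ A
      · simp [h1def, Set.indicator_of_mem h]
      · simp [h1def, Set.indicator_of_notMem h]
    have h1nonneg : ∀ ω, 0 ≤ h1 ω := fun ω =>
      Set.indicator_nonneg (fun _ _ => zero_le_one) ω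
    have hintb : ∀ (f : Ω → ℝ), Measurable[m0] f → (∀ ω, |f ω| ≤ 1) → Integrable f P :=
      fun f hf hb => (integrable_const 1).mono' hf.aestronglyMeasurable
        (Filter.Eventually.of_forall fun ω => by simpa [Real.norm_eq_abs] using hb ω)
    have hker_e : ∀ g : ProbabilityMeasure S → ℝ, Measurable g → ∀ ω, ω ∈ A →
        ∫ ν, g ν ∂(bootstrapKernel hN (μ n ω) : Measure (ProbabilityMeasure S))
          = g (μ n ω) := by
      intro g hg ω hω
      obtain ⟨x, hx⟩ := hDdirac _ hω
      rw [hx, bootstrapKernel_dirac hN x, ← hx]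
      exact integral_dirac' _ _ hg.stronglyMeasurable
    have hE1 : ∫ ω, h1 ω * (e (μ (n+1) ω) * e (μ (n+1) ω)) ∂P
        = ∫ ω, h1 ω * (e (μ n ω) * e (μ n ω)) ∂P := by
      rw [tower n (fun ν => e ν * e ν) (hemeas.mul hemeas) 1 heebound h1 h1sm 1 h1b]
      refine integral_congr_ae (Filter.Eventually.of_forall fun ω => ?_)
      dsimp only
      by_cases hω : ω ∈ A
      · rw [hker_e (fun ν => e ν * e ν) (hemeas.mul hemeas) ω hω]
      · simp [h1def, Set.indicator_of_notMem hω]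
    have hE2 : ∫ ω, (h1 ω * e (μ n ω)) * e (μ (n+1) ω) ∂P
        = ∫ ω, (h1 ω * e (μ n ω)) * e (μ n ω) ∂P := by
      have hsm2 : StronglyMeasurable[ℱ n] (fun ω => h1 ω * e (μ n ω)) :=
        h1sm.mul ((hemeas.comp (hadp n)).stronglyMeasurable)
      have hb2 : ∀ ω, |h1 ω * e (μ n ω)| ≤ 1 := fun ω =>
        habs _ _ (h1b ω) (hebound (μ n ω))
      rw [tower n e hemeas 1 hebound _ hsm2 1 hb2]
      refine integral_congr_ae (Filter.Eventually.of_forall fun ω => ?_)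
      dsimp only
      by_cases hω : ω ∈ A
      · rw [hker_e _ hemeas ω hω]
      · simp [h1def, Set.indicator_of_notMem hω]
    -- integrability of the three terms
    have hT1int : Integrable (fun ω => h1 ω * (e (μ (n+1) ω) * e (μ (n+1) ω))) P := by
      refine hintb _ (mh1.mul ((hemeas.comp (hμm (n+1))).mul (hemeas.comp (hμm (n+1))))) ?_
      exact fun ω => habs _ _ (h1b ω) (heebound (μ (n+1) ω))
    have hT2int : Integrable (fun ω => (h1 ω * e (μ n ω)) * e (μ (n+1) ω)) P := by
      refine hintb _ ((mh1.mul (hemeas.comp (hμm n))).mul (hemeas.comp (hμm (n+1)))) ?_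
      exact fun ω => habs _ _ (habs _ _ (h1b ω) (hebound (μ n ω))) (hebound (μ (n+1) ω))
    have hT3int : Integrable (fun ω => h1 ω * (e (μ n ω) * e (μ n ω))) P := by
      refine hintb _ (mh1.mul ((hemeas.comp (hμm n)).mul (hemeas.comp (hμm n)))) ?_
      exact fun ω => habs _ _ (h1b ω) (heebound (μ n ω))
    have hFdecomp : (fun ω => h1 ω * (e (μ (n+1) ω) - e (μ n ω))^2)
        = fun ω => (h1 ω * (e (μ (n+1) ω) * e (μ (n+1) ω))
            - 2 * ((h1 ω * e (μ n ω)) * e (μ (n+1) ω)))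
            + h1 ω * (e (μ n ω) * e (μ n ω)) := by
      funext ω; ring
    have hFint : Integrable (fun ω => h1 ω * (e (μ (n+1) ω) - e (μ n ω))^2) P := by
      rw [hFdecomp]
      exact (hT1int.sub (hT2int.const_mul 2)).add hT3int
    have hsubint : Integrable (fun ω => h1 ω * (e (μ (n+1) ω) * e (μ (n+1) ω))
        - 2 * ((h1 ω * e (μ n ω)) * e (μ (n+1) ω))) P := hT1int.sub (hT2int.const_mul 2)
    have hIzero : ∫ ω, h1 ω * (e (μ (n+1) ω) - e (μ n ω))^2 ∂P = 0 := by
      rw [hFdecomp, integral_add hsubint hT3int,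
        integral_sub hT1int (hT2int.const_mul 2), integral_const_mul 2, hE1, hE2]
      have hassoc : (fun ω => (h1 ω * e (μ n ω)) * e (μ n ω))
          = fun ω => h1 ω * (e (μ n ω) * e (μ n ω)) := by
        funext ω; ring
      rw [hassoc]
      ring
    have hae0 := (integral_eq_zero_iff_of_nonneg
      (fun ω => mul_nonneg (h1nonneg ω) (sq_nonneg _)) hFint).mp hIzero
    filter_upwards [hae0] with ω hω hωA
    have h1ω : h1 ω = 1 := Set.indicator_of_mem (show ω ∈ A from hωA) _
    have hsq : (e (μ (n+1) ω) - e (μ n ω))^2 = 0 := by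
      have := hω
      simp only [Pi.zero_apply] at this
      rw [h1ω, one_mul] at this
      exact this
    have hdiff := pow_eq_zero_iff (n := 2) (by norm_num) |>.mp hsq
    have := sub_eq_zero.mp hdiff
    rw [hedef] at this
    exact this
  -- Final assembly
  set γ : Ω → S := fun ω =>
    if hx : ∃ x : S, ∀ᶠ n in atTop, μ n ω = diracPM x then hx.choose
    else Classical.arbitrary S with hγdef
  refine ⟨γ, ?_⟩
  have hstab' : ∀ᵐ ω ∂P, ∀ (n k : ℕ), μ n ω ∈ Dset →
      ((μ (n+1) ω : Measure S) (C k)).toReal = ((μ n ω : Measure S) (C k)).toReal := by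
    rw [ae_all_iff]; intro n; rw [ae_all_iff]; intro k; exact hstab n k
  filter_upwards [hBC, hstab'] with ω hω1 hω2
  obtain ⟨n₀, hn₀⟩ := eventually_atTop.mp hω1
  obtain ⟨x₀, hx₀⟩ := hDdirac _ (hn₀ n₀ le_rfl)
  have hconst : ∀ m : ℕ, μ (n₀ + m) ω = diracPM x₀ := by
    intro m
    induction m with
    | zero => simpa using hx₀
    | succ m ih =>
      obtain ⟨y, hy⟩ := hDdirac _ (hn₀ (n₀+m+1) (by omega))
      have hkeq : ∀ k, ((μ (n₀+m+1) ω : Measure S) (C k)).toReal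
          = ((μ (n₀+m) ω : Measure S) (C k)).toReal := fun k =>
        hω2 (n₀+m) k (hn₀ (n₀+m) (by omega))
      have hyx : y = x₀ := by
        by_contra hne
        obtain ⟨k, hk1, hk2⟩ := hCsep y x₀ hne
        have h1 : ((μ (n₀+m+1) ω : Measure S) (C k)).toReal = 1 := by
          rw [hy]
          show ((Measure.dirac y : Measure S) (C k)).toReal = 1
          rw [Measure.dirac_apply' _ (hCopen k).measurableSet, Set.indicator_of_mem hk1]
          simp
        have h2 : ((μ (n₀+m) ω : Measure S) (C k)).toReal = 0 := by
          rw [ih]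
          show ((Measure.dirac x₀ : Measure S) (C k)).toReal = 0
          rw [Measure.dirac_apply' _ (hCopen k).measurableSet, Set.indicator_of_notMem hk2]
          simp
        rw [hkeq k, h2] at h1
        exact one_ne_zero h1.symm
      have hidx : n₀ + (m+1) = (n₀ + m) + 1 := by omega
      rw [hidx, hy, hyx]
  have hxev : ∃ x : S, ∀ᶠ n in atTop, μ n ω = diracPM x := by
    refine ⟨x₀, eventually_atTop.mpr ⟨n₀, fun n hn => ?_⟩⟩
    have h1 := hconst (n - n₀)
    rwa [Nat.add_sub_cancel' hn] at h1
  have hγω : γ ω = hxev.choose := by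
    simp only [hγdef]
    rw [dif_pos hxev]
  have hγev : ∀ᶠ n in atTop, μ n ω = diracPM (γ ω) := by
    rw [hγω]
    exact hxev.choose_spec
  exact Tendsto.congr' (hγev.mono fun n hn => hn.symm) tendsto_const_nhds
end

section
/- Let S be a Polish space and N ≥ 1. The bootstrap (empirical-measure) kernel κ_N : P(S) → P(P(S)), defined by letting κ_N(μ) be the pushforward of the product measure μ^{⊗N} on S^N under the map (x_1,…,x_N) ↦ (1/N)∑_{i=1}^N δ_{x_i}, is continuous when P(S) and P(P(S)) carry their topologies of weak convergence. (In particular, the Markov chain generated by κ_N is Feller.) -/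
open MeasureTheory Topology Filter BoundedContinuousFunction
open scoped ENNReal NNReal

section LPAux

open Metric EMetric Set

variable {X Y : Type*} [MeasurableSpace X] [PseudoEMetricSpace X]
  [MeasurableSpace Y] [PseudoEMetricSpace Y]

lemma thickening_preimage_mk_right {B : Set (X × Y)} {δ : ℝ} (y : Y) :
    Metric.thickening δ ((fun x => (x, y)) ⁻¹' B) ⊆
      (fun x => (x, y)) ⁻¹' Metric.thickening δ B := by
  intro x hx
  obtain ⟨x', hx'B, hd⟩ :=
    EMetric.infEdist_lt_iff.mp (Metric.mem_thickening_iff_infEdist_lt.mp hx)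
  refine Metric.mem_thickening_iff_infEdist_lt.mpr
    (EMetric.infEdist_lt_iff.mpr ⟨(x', y), hx'B, ?_⟩)
  have he : edist (x, y) ((x', y) : X × Y) = edist x x' := by
    rw [Prod.edist_eq, edist_self]
    exact max_eq_left zero_le
  rw [he]; exact hd

lemma thickening_preimage_mk_left {B : Set (X × Y)} {δ : ℝ} (x : X) :
    Metric.thickening δ (Prod.mk x ⁻¹' B) ⊆ Prod.mk x ⁻¹' Metric.thickening δ B := by
  intro y hy
  obtain ⟨y', hy'B, hd⟩ :=
    EMetric.infEdist_lt_iff.mp (Metric.mem_thickening_iff_infEdist_lt.mp hy)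
  refine Metric.mem_thickening_iff_infEdist_lt.mpr
    (EMetric.infEdist_lt_iff.mpr ⟨(x, y'), hy'B, ?_⟩)
  have he : edist (x, y) ((x, y') : X × Y) = edist y y' := by
    rw [Prod.edist_eq, edist_self]
    exact max_eq_right zero_le
  rw [he]; exact hd

lemma prod_left_aux [OpensMeasurableSpace (X × Y)]
    (α β : Measure X) (γ : Measure Y)
    [IsProbabilityMeasure α] [IsProbabilityMeasure β] [IsProbabilityMeasure γ]
    {ε : ℝ≥0∞} (hlt : levyProkhorovEDist α β < ε)
    {B : Set (X × Y)} (B_mble : MeasurableSet B) :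
    (α.prod γ) B ≤ (β.prod γ) (Metric.thickening ε.toReal B) + ε := by
  have thk_mble : MeasurableSet (Metric.thickening ε.toReal B) :=
    Metric.isOpen_thickening.measurableSet
  rw [Measure.prod_apply_symm B_mble, Measure.prod_apply_symm thk_mble]
  have step : ∀ y, α ((fun x => (x, y)) ⁻¹' B)
      ≤ β ((fun x => (x, y)) ⁻¹' Metric.thickening ε.toReal B) + ε := fun y =>
    (left_measure_le_of_levyProkhorovEDist_lt hlt
        (B_mble.preimage measurable_prodMk_right)).trans
      (add_le_add_left (measure_mono (thickening_preimage_mk_right y)) ε)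
  calc ∫⁻ y, α ((fun x => (x, y)) ⁻¹' B) ∂γ
      ≤ ∫⁻ y, (β ((fun x => (x, y)) ⁻¹' Metric.thickening ε.toReal B) + ε) ∂γ :=
        lintegral_mono step
    _ = ∫⁻ y, β ((fun x => (x, y)) ⁻¹' Metric.thickening ε.toReal B) ∂γ + ε := by
        rw [lintegral_add_right _ measurable_const, lintegral_const, measure_univ, mul_one]

lemma prod_right_aux [OpensMeasurableSpace (X × Y)]
    (γ : Measure X) (α β : Measure Y)
    [IsProbabilityMeasure α] [IsProbabilityMeasure β] [IsProbabilityMeasure γ]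
    {ε : ℝ≥0∞} (hlt : levyProkhorovEDist α β < ε)
    {B : Set (X × Y)} (B_mble : MeasurableSet B) :
    (γ.prod α) B ≤ (γ.prod β) (Metric.thickening ε.toReal B) + ε := by
  have thk_mble : MeasurableSet (Metric.thickening ε.toReal B) :=
    Metric.isOpen_thickening.measurableSet
  rw [Measure.prod_apply B_mble, Measure.prod_apply thk_mble]
  have step : ∀ x, α (Prod.mk x ⁻¹' B)
      ≤ β (Prod.mk x ⁻¹' Metric.thickening ε.toReal B) + ε := fun x =>
    (left_measure_le_of_levyProkhorovEDist_lt hlt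
        (B_mble.preimage measurable_prodMk_left)).trans
      (add_le_add_left (measure_mono (thickening_preimage_mk_left x)) ε)
  calc ∫⁻ x, α (Prod.mk x ⁻¹' B) ∂γ
      ≤ ∫⁻ x, (β (Prod.mk x ⁻¹' Metric.thickening ε.toReal B) + ε) ∂γ :=
        lintegral_mono step
    _ = ∫⁻ x, β (Prod.mk x ⁻¹' Metric.thickening ε.toReal B) ∂γ + ε := by
        rw [lintegral_add_right _ measurable_const, lintegral_const, measure_univ, mul_one]

lemma levyProkhorovEDist_prod_left [OpensMeasurableSpace (X × Y)]
    (α β : Measure X) (γ : Measure Y)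
    [IsProbabilityMeasure α] [IsProbabilityMeasure β] [IsProbabilityMeasure γ] :
    levyProkhorovEDist (α.prod γ) (β.prod γ) ≤ levyProkhorovEDist α β := by
  apply levyProkhorovEDist_le_of_forall
  intro ε B hε _ B_mble
  refine ⟨prod_left_aux α β γ hε B_mble, prod_left_aux β α γ ?_ B_mble⟩
  rwa [levyProkhorovEDist_comm] at hε

lemma levyProkhorovEDist_prod_right [OpensMeasurableSpace (X × Y)]
    (γ : Measure X) (α β : Measure Y)
    [IsProbabilityMeasure α] [IsProbabilityMeasure β] [IsProbabilityMeasure γ] :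
    levyProkhorovEDist (γ.prod α) (γ.prod β) ≤ levyProkhorovEDist α β := by
  apply levyProkhorovEDist_le_of_forall
  intro ε B hε _ B_mble
  refine ⟨prod_right_aux γ α β hε B_mble, prod_right_aux γ β α ?_ B_mble⟩
  rwa [levyProkhorovEDist_comm] at hε

lemma levyProkhorovEDist_prod_prod [OpensMeasurableSpace (X × Y)]
    (α β : Measure X) (γ δ : Measure Y)
    [IsProbabilityMeasure α] [IsProbabilityMeasure β]
    [IsProbabilityMeasure γ] [IsProbabilityMeasure δ] :
    levyProkhorovEDist (α.prod γ) (β.prod δ) ≤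
      levyProkhorovEDist α β + levyProkhorovEDist γ δ :=
  (levyProkhorovEDist_triangle _ (β.prod γ) _).trans
    (add_le_add (levyProkhorovEDist_prod_left α β γ)
      (levyProkhorovEDist_prod_right β γ δ))

lemma levyProkhorovEDist_map_le [OpensMeasurableSpace Y]
    (e : X → Y) (he : Isometry e) (hm : Measurable e) (μ ν : Measure X) :
    levyProkhorovEDist (μ.map e) (ν.map e) ≤ levyProkhorovEDist μ ν := by
  apply levyProkhorovEDist_le_of_forall
  intro ε B hε _ B_mble
  have thksub : ∀ δ : ℝ,
      Metric.thickening δ (e ⁻¹' B) ⊆ e ⁻¹' Metric.thickening δ B := by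
    intro δ x hx
    obtain ⟨x', hx', hd⟩ :=
      EMetric.infEdist_lt_iff.mp (Metric.mem_thickening_iff_infEdist_lt.mp hx)
    exact Metric.mem_thickening_iff_infEdist_lt.mpr
      (EMetric.infEdist_lt_iff.mpr ⟨e x', hx', by rwa [he.edist_eq]⟩)
  have hε' : levyProkhorovEDist ν μ < ε := by rwa [levyProkhorovEDist_comm] at hε
  constructor
  · rw [Measure.map_apply hm B_mble,
      Measure.map_apply hm Metric.isOpen_thickening.measurableSet]
    exact (left_measure_le_of_levyProkhorovEDist_lt hε (B_mble.preimage hm)).trans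
      (add_le_add_left (measure_mono (thksub _)) ε)
  · rw [Measure.map_apply hm B_mble,
      Measure.map_apply hm Metric.isOpen_thickening.measurableSet]
    exact (left_measure_le_of_levyProkhorovEDist_lt hε' (B_mble.preimage hm)).trans
      (add_le_add_left (measure_mono (thksub _)) ε)

end LPAux

section PiAux

open Metric EMetric Set

lemma isometry_piFinSuccAbove_symm {S : Type*} [PseudoEMetricSpace S] [MeasurableSpace S]
    (n : ℕ) :
    Isometry ((MeasurableEquiv.piFinSuccAbove (fun _ : Fin (n + 1) => S) 0).symm) := by
  intro p q
  show edist (Fin.insertNth (α := fun _ : Fin (n + 1) => S) 0 p.1 p.2)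
      (Fin.insertNth (α := fun _ : Fin (n + 1) => S) 0 q.1 q.2) = edist p q
  simp only [Fin.insertNth_zero']
  rw [edist_pi_def, Fin.univ_succ, Finset.sup_cons, Finset.sup_map, Prod.edist_eq]
  simp [Function.comp_def, Fin.cons_succ, edist_pi_def]

lemma levyProkhorovEDist_pi_le {S : Type*} [MeasurableSpace S] [MetricSpace S]
    [SecondCountableTopology S] [BorelSpace S]
    (μ ν : Measure S) [IsProbabilityMeasure μ] [IsProbabilityMeasure ν] (n : ℕ) :
    levyProkhorovEDist (Measure.pi fun _ : Fin n => μ) (Measure.pi fun _ : Fin n => ν)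
      ≤ n * levyProkhorovEDist μ ν := by
  induction n with
  | zero =>
      rw [Measure.pi_of_empty, Measure.pi_of_empty, levyProkhorovEDist_self]
      simp
  | succ n ih =>
      have h1 := (measurePreserving_piFinSuccAbove (fun _ : Fin (n + 1) => μ) 0).symm
        (MeasurableEquiv.piFinSuccAbove (fun _ : Fin (n + 1) => S) 0)
      have h2 := (measurePreserving_piFinSuccAbove (fun _ : Fin (n + 1) => ν) 0).symm
        (MeasurableEquiv.piFinSuccAbove (fun _ : Fin (n + 1) => S) 0)
      calc levyProkhorovEDist (Measure.pi fun _ : Fin (n + 1) => μ)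
            (Measure.pi fun _ : Fin (n + 1) => ν)
          = levyProkhorovEDist
              ((μ.prod (Measure.pi fun _ : Fin n => μ)).map
                (MeasurableEquiv.piFinSuccAbove (fun _ : Fin (n + 1) => S) 0).symm)
              ((ν.prod (Measure.pi fun _ : Fin n => ν)).map
                (MeasurableEquiv.piFinSuccAbove (fun _ : Fin (n + 1) => S) 0).symm) := by
            rw [h1.map_eq, h2.map_eq]
        _ ≤ levyProkhorovEDist (μ.prod (Measure.pi fun _ : Fin n => μ))
              (ν.prod (Measure.pi fun _ : Fin n => ν)) :=
            levyProkhorovEDist_map_le _ (isometry_piFinSuccAbove_symm n)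
              (MeasurableEquiv.piFinSuccAbove (fun _ : Fin (n + 1) => S) 0).symm.measurable _ _
        _ ≤ levyProkhorovEDist μ ν +
              levyProkhorovEDist (Measure.pi fun _ : Fin n => μ)
                (Measure.pi fun _ : Fin n => ν) :=
            levyProkhorovEDist_prod_prod _ _ _ _
        _ ≤ levyProkhorovEDist μ ν + n * levyProkhorovEDist μ ν := add_le_add le_rfl ih
        _ = (↑(n + 1)) * levyProkhorovEDist μ ν := by
            rw [Nat.cast_succ, add_mul, one_mul, add_comm]

end PiAux

lemma levyProkhorov_edist_eq {Ω : Type*} [MeasurableSpace Ω] [PseudoMetricSpace Ω]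
    [OpensMeasurableSpace Ω] (μ ν : LevyProkhorov (ProbabilityMeasure Ω)) :
    edist μ ν =
      levyProkhorovEDist (LevyProkhorov.toMeasure μ).toMeasure
        (LevyProkhorov.toMeasure ν).toMeasure := by
  rw [edist_dist, LevyProkhorov.dist_probabilityMeasure_def, levyProkhorovDist,
    ENNReal.ofReal_toReal (levyProkhorovEDist_ne_top _ _)]

/-- The i.i.d. product map `μ ↦ μ^{⊗N}` on probability measures. -/
noncomputable def piProb {S : Type*} [MeasurableSpace S] (N : ℕ)
    (μ : ProbabilityMeasure S) : ProbabilityMeasure (Fin N → S) :=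
  ⟨Measure.pi fun _ : Fin N => (μ : Measure S), inferInstance⟩

/-- The map `μ ↦ μ^{⊗N}` is continuous on probability measures over a Polish space, in the
topology of weak convergence. -/
lemma continuous_pi_probabilityMeasure
    {S : Type*} [MeasurableSpace S] [TopologicalSpace S] [PolishSpace S] [BorelSpace S]
    (N : ℕ) :
    Continuous (piProb (S := S) N) := by
  letI := TopologicalSpace.upgradeIsCompletelyMetrizable S
  let g : LevyProkhorov (ProbabilityMeasure S) →
      LevyProkhorov (ProbabilityMeasure (Fin N → S)) :=
    fun μ => LevyProkhorov.ofMeasure (piProb N (LevyProkhorov.toMeasure μ))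
  have hg : LipschitzWith N g := by
    intro μ ν
    rw [levyProkhorov_edist_eq, levyProkhorov_edist_eq]
    exact levyProkhorovEDist_pi_le
      ((LevyProkhorov.toMeasure μ : ProbabilityMeasure S) : Measure S)
      ((LevyProkhorov.toMeasure ν : ProbabilityMeasure S) : Measure S) N
  exact LevyProkhorov.continuous_toMeasure_probabilityMeasure.comp
    (hg.continuous.comp LevyProkhorov.continuous_ofMeasure_probabilityMeasure)

/-- The bootstrap (empirical-measure) kernel `κ_N : P(S) → P(P(S))` is continuous when `P(S)`
and `P(P(S))` carry their topologies of weak convergence; in particular the Markov chain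
generated by `κ_N` is Feller. -/
theorem bootstrapKernel_continuous
    {S : Type*} [MeasurableSpace S] [TopologicalSpace S] [PolishSpace S] [BorelSpace S]
    [MeasurableSpace (ProbabilityMeasure S)] [BorelSpace (ProbabilityMeasure S)]
    {N : ℕ} (hN : 0 < N) :
    Continuous (bootstrapKernel (S := S) hN) := by
  have hrepr : bootstrapKernel (S := S) hN =
      (fun ν : ProbabilityMeasure (Fin N → S) =>
        ν.map (f := empiricalMeasure hN)
          (continuous_empiricalMeasure hN).measurable.aemeasurable) ∘
      (piProb (S := S) N) := by
    funext μ
    apply ProbabilityMeasure.toMeasure_injective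
    rfl
  rw [hrepr]
  exact (ProbabilityMeasure.continuous_map (continuous_empiricalMeasure hN)).comp
    (continuous_pi_probabilityMeasure N)
end

section
/- Let S be a Polish space, N ≥ 1, and let κ_N : P(S) → P(P(S)) be the bootstrap (empirical-measure) kernel: κ_N(μ) is the pushforward of μ^{⊗N} under (x_1,…,x_N) ↦ (1/N)∑_{i=1}^N δ_{x_i}. Then μ ∈ P(S) is an absorbing state for κ_N, i.e., κ_N(μ) = δ_μ (the Dirac measure on P(S) concentrated at μ), if and only if μ = δ_x for some x ∈ S. In other words, the absorbing states of the purely generative recursive training chain are exactly the Dirac measures. -/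
open MeasureTheory Topology Filter BoundedContinuousFunction
open scoped ENNReal NNReal

lemma empiricalMeasure_const {S : Type*} [MeasurableSpace S] {N : ℕ} (hN : 0 < N) (a : S) :
    empiricalMeasure hN (fun _ => a)
      = (⟨Measure.dirac a, inferInstance⟩ : ProbabilityMeasure S) := by
  apply Subtype.ext
  show (N : ℝ≥0∞)⁻¹ • ∑ _i : Fin N, Measure.dirac a = Measure.dirac a
  rw [Finset.sum_const, Finset.card_univ, Fintype.card_fin,
    ← Nat.cast_smul_eq_nsmul ℝ≥0∞, smul_smul,
    ENNReal.inv_mul_cancel (by exact_mod_cast hN.ne') (by simp), one_smul]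

/-- `μ ∈ P(S)` is an absorbing state of the bootstrap kernel, i.e. `κ_N(μ) = δ_μ` in
`P(P(S))`, if and only if `μ` is a Dirac measure `δ_x` for some `x ∈ S`: the absorbing states
of the purely generative recursive training chain are exactly the Dirac measures. -/
theorem bootstrapKernel_absorbing_iff_dirac
    {S : Type*} [MeasurableSpace S] [TopologicalSpace S] [PolishSpace S] [BorelSpace S]
    [MeasurableSpace (ProbabilityMeasure S)] [BorelSpace (ProbabilityMeasure S)]
    {N : ℕ} (hN : 0 < N) (μ : ProbabilityMeasure S) :
    bootstrapKernel hN μ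
        = (⟨Measure.dirac μ, inferInstance⟩ : ProbabilityMeasure (ProbabilityMeasure S))
      ↔ ∃ x : S, μ = (⟨Measure.dirac x, inferInstance⟩ : ProbabilityMeasure S) := by
  have hmeas : Measurable (empiricalMeasure (S := S) hN) :=
    (continuous_empiricalMeasure hN).measurable
  set π : Measure (Fin N → S) := Measure.pi fun _ : Fin N => (μ : Measure S) with hπ
  constructor
  · intro h
    have hval : π.map (empiricalMeasure hN) = Measure.dirac μ := congrArg Subtype.val h
    set A : Set (Fin N → S) := empiricalMeasure hN ⁻¹' {μ} with hA
    have hA1 : π A = 1 := by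
      rw [hA, ← Measure.map_apply hmeas (measurableSet_singleton μ), hval,
        Measure.dirac_apply_of_mem (Set.mem_singleton μ)]
    have hAc : π Aᶜ = 0 := by
      rw [prob_compl_eq_zero_iff (hmeas (measurableSet_singleton μ))]; exact hA1
    obtain ⟨y0, hy0⟩ := nonempty_of_measure_ne_zero (by rw [hA1]; exact one_ne_zero)
    set a : S := y0 ⟨0, hN⟩ with ha
    have hμa : (μ : Measure S) {a} ≠ 0 := by
      have : empiricalMeasure hN y0 = μ := hy0
      rw [← this]
      show ((N : ℝ≥0∞)⁻¹ • ∑ i, Measure.dirac (y0 i)) {a} ≠ 0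
      rw [Measure.smul_apply, smul_eq_mul]
      refine mul_ne_zero (by simp) ?_
      rw [Measure.finset_sum_apply]
      refine fun hz => ?_
      have h0 : Measure.dirac (y0 ⟨0, hN⟩) {a} = 0 :=
        le_antisymm (hz ▸ Finset.single_le_sum (f := fun i => Measure.dirac (y0 i) {a})
          (fun i _ => zero_le) (Finset.mem_univ (⟨0, hN⟩ : Fin N))) zero_le
      rw [Measure.dirac_apply_of_mem (show y0 ⟨0, hN⟩ ∈ ({a} : Set S) from rfl)] at h0
      exact one_ne_zero h0
    set C : Set (Fin N → S) := Set.univ.pi fun _ => ({a} : Set S) with hC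
    have hCpos : π C ≠ 0 := by
      rw [hC, hπ, Measure.pi_pi]
      simp only [Finset.prod_const, Finset.card_univ, Fintype.card_fin]
      exact pow_ne_zero _ hμa
    have hCA : π (C ∩ A) ≠ 0 := by rwa [measure_inter_conull hAc]
    obtain ⟨y, hyC, hyA⟩ := nonempty_of_measure_ne_zero hCA
    refine ⟨a, ?_⟩
    have hyc : y = fun _ => a := funext fun i => hyC i (Set.mem_univ i)
    have : empiricalMeasure hN y = μ := hyA
    rw [← this, hyc, empiricalMeasure_const]
  · rintro ⟨x, hx⟩
    have hxd : (μ : Measure S) = Measure.dirac x := congrArg Subtype.val hx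
    have hae : ∀ᵐ y ∂π, empiricalMeasure hN y = μ := by
      have hC : π (Set.univ.pi fun _ : Fin N => ({x} : Set S))ᶜ = 0 := by
        rw [prob_compl_eq_zero_iff (MeasurableSet.univ_pi fun _ => measurableSet_singleton x),
          hπ, Measure.pi_pi, hxd]
        simp
      rw [ae_iff]
      refine measure_mono_null (fun y hy => ?_) hC
      intro hymem
      apply hy
      have hyc : y = fun _ => x := funext fun i => hymem i (Set.mem_univ i)
      rw [hyc, empiricalMeasure_const, hx]
    apply Subtype.ext
    show π.map (empiricalMeasure hN) = Measure.dirac μ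
    rw [Measure.map_congr hae, Measure.map_const, measure_univ, one_smul]
end
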